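/- arXiv:2209.10799 — 7 statements merged into one kernel-verified Lean document; each statement's English description precedes it below -/
import Mathlib

section
/- Let u_1,…,u_q be monomials in S = K[x_1,…,x_n] with total degree m = Σ_{i=1}^q deg(u_i), and write m = qd + r with 0 ≤ r < q. Write the product u_1⋯u_q = x_{k_1}x_{k_2}⋯x_{k_m} with k_1 ≤ k_2 ≤ ⋯ ≤ k_m, and define u'_i = ∏_{s=0}^{d} x_{k_{sq+i}} for 1 ≤ i ≤ r and u'_i = ∏_{s=0}^{d-1} x_{k_{sq+i}} for r+1 ≤ i ≤ q. Then the q-tuple (u'_1,…,u'_q) is sorted of type (d,r) and satisfies u'_1⋯u'_q = u_1⋯u_q. -/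
/-!
Monomials in `S = K[x_1, …, x_n]` are identified with multisets of (here, natural-number)
indices. -/

/-- Split a list into the sublist of entries in odd positions (1st, 3rd, 5th, …)
and the sublist of entries in even positions (2nd, 4th, …). -/
def altSplit {α : Type*} : List α → List α × List α
  | [] => ([], [])
  | a :: l => (a :: (altSplit l).2, (altSplit l).1)

/-- The sorting `sort(u,v)` of a pair of monomials: write the product `u*v` as
`x_{i_1} x_{i_2} ⋯ x_{i_t}` with `i_1 ≤ i_2 ≤ ⋯ ≤ i_t`; then `u'` is the product of the
variables in odd positions and `v'` the product of those in even positions. -/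
def sortPair {α : Type*} [LinearOrder α] (u v : Multiset α) : Multiset α × Multiset α :=
  (((altSplit ((u + v).sort (· ≤ ·))).1 : List α), ((altSplit ((u + v).sort (· ≤ ·))).2 : List α))

/-- A pair of monomials is sorted if `sort(u,v) = (u,v)`. -/
def IsSortedPair {α : Type*} [LinearOrder α] (u v : Multiset α) : Prop :=
  sortPair u v = (u, v)

/-- A `q`-tuple of monomials is sorted if `(u_i, u_j)` is a sorted pair for all `i < j`. -/
def IsSortedTuple {α : Type*} [LinearOrder α] {q : ℕ} (u : Fin q → Multiset α) : Prop :=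
  ∀ i j : Fin q, i < j → IsSortedPair (u i) (u j)

/-- A `q`-tuple of monomials is sorted of type `(d,r)` if it is sorted, its first `r` entries
have degree `d+1` and the remaining entries have degree `d`. -/
def IsSortedOfType {α : Type*} [LinearOrder α] {q : ℕ} (u : Fin q → Multiset α)
    (d r : ℕ) : Prop :=
  IsSortedTuple u ∧ ∀ i : Fin q, Multiset.card (u i) = if (i : ℕ) < r then d + 1 else d

def interleave {α : Type*} : List α → List α → List α
  | [], B => B
  | a :: A, B => a :: interleave B A
termination_by A B => A.length + B.length
decreasing_by simp; omega

lemma interleave_nil {α : Type*} (B : List α) : interleave [] B = B := by simp [interleave]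

lemma interleave_cons {α : Type*} (a : α) (A B : List α) :
    interleave (a :: A) B = a :: interleave B A := by simp [interleave]

lemma coe_interleave {α : Type*} : ∀ (A B : List α), (↑(interleave A B) : Multiset α) = ↑A + ↑B := by
  intro A B
  induction A, B using interleave.induct with
  | case1 B => simp [interleave_nil]
  | case2 a A B ih =>
      rw [interleave_cons, ← Multiset.cons_coe, ih, ← Multiset.cons_coe, Multiset.cons_add,
        add_comm]

lemma length_interleave {α : Type*} : ∀ (A B : List α),
    (interleave A B).length = A.length + B.length := by
  intro A B
  induction A, B using interleave.induct with
  | case1 B => simp [interleave_nil]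
  | case2 a A B ih => rw [interleave_cons]; simp [ih]; omega

lemma altSplit_interleave {α : Type*} : ∀ (A B : List α), B.length ≤ A.length →
    A.length ≤ B.length + 1 → altSplit (interleave A B) = (A, B) := by
  intro A B
  induction A, B using interleave.induct with
  | case1 B =>
      intro h1 h2
      have : B = [] := List.eq_nil_of_length_eq_zero (by simpa using h1)
      subst this
      simp [interleave_nil, altSplit]
  | case2 a A B ih =>
      intro h1 h2
      have h1' : A.length ≤ B.length := by simp at h1 h2 ⊢; omega
      have h2' : B.length ≤ A.length + 1 := by simp at h1 h2 ⊢; omega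
      rw [interleave_cons, altSplit, ih h1' h2']

lemma getD_interleave {α : Type*} (x : α) : ∀ (A B : List α), B.length ≤ A.length →
    A.length ≤ B.length + 1 → ∀ k : ℕ,
    (interleave A B).getD k x = if Even k then A.getD (k / 2) x else B.getD (k / 2) x := by
  intro A B
  induction A, B using interleave.induct with
  | case1 B =>
      intro h1 h2 k
      have : B = [] := List.eq_nil_of_length_eq_zero (by simpa using h1)
      subst this
      simp [interleave_nil]
  | case2 a A B ih =>
      intro h1 h2 k
      rw [interleave_cons]
      have h1' : A.length ≤ B.length := by simp at h1 h2 ⊢; omega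
      have h2' : B.length ≤ A.length + 1 := by simp at h1 h2 ⊢; omega
      match k with
      | 0 => simp
      | (k+1) =>
        rw [List.getD_cons_succ, ih h1' h2' k]
        by_cases he : Even k
        · have ho : ¬ Even (k+1) := by simp [Nat.even_iff] at he ⊢; omega
          rw [if_pos he, if_neg ho]
          have : (k+1)/2 = k/2 := by rw [Nat.even_iff] at he; omega
          rw [this]
        · have ho : Even (k+1) := by simp [Nat.even_iff, Nat.odd_iff] at he ⊢; omega
          rw [if_neg he, if_pos ho]
          have : (k+1)/2 = k/2 + 1 := by rw [Nat.even_iff] at he; omega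
          rw [this, List.getD_cons_succ]

lemma key_lt (q d r i s : ℕ) (hr : r < q) (hi : i < q) :
    s * q + i < q * d + r ↔ s < (if i < r then d + 1 else d) := by
  have hqd : q * d = d * q := Nat.mul_comm _ _
  constructor
  · intro h
    by_contra hs
    push_neg at hs
    have h2 : (if i < r then d + 1 else d) * q ≤ s * q := Nat.mul_le_mul_right _ hs
    split_ifs at h2 with hir
    · have e : (d + 1) * q = d * q + q := by ring
      rw [e] at h2
      rw [hqd] at h
      linarith
    · rw [hqd] at h
      push_neg at hir
      linarith
  · intro hs
    split_ifs at hs with hir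
    · have h2 : s * q ≤ d * q := Nat.mul_le_mul_right _ (by omega)
      rw [hqd]
      linarith
    · have h2 : (s + 1) * q ≤ d * q := Nat.mul_le_mul_right _ (by omega)
      have e : (s + 1) * q = s * q + q := by ring
      rw [e] at h2
      rw [hqd]
      push_neg at hir
      linarith

lemma pos_mono (q i j : ℕ) (hij : i < j) (hjq : j < q) {t t' : ℕ} (h : t < t') :
    t / 2 * q + (if Even t then i else j) ≤ t' / 2 * q + (if Even t' then i else j) := by
  have hs : t / 2 ≤ t' / 2 := Nat.div_le_div_right h.le
  rcases eq_or_lt_of_le hs with hs | hs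
  · rw [← hs]
    have hpar : Even t ∧ ¬ Even t' := by
      rw [Nat.even_iff, Nat.even_iff]; omega
    rw [if_pos hpar.1, if_neg hpar.2]
    omega
  · have h1 : t / 2 * q + q ≤ t' / 2 * q := by
      have hs' : t / 2 + 1 ≤ t' / 2 := hs
      have := Nat.mul_le_mul_right q hs'
      have e : (t / 2 + 1) * q = t / 2 * q + q := by ring
      omega
    have e1 : (if Even t then i else j) ≤ j := by split <;> omega
    have e2 : i ≤ (if Even t' then i else j) := by split <;> omega
    omega

lemma getD_mono {l : List ℕ} (hl : l.Pairwise (· ≤ ·)) {k k' : ℕ} (h : k ≤ k')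
    (h' : k' < l.length) : l.getD k 0 ≤ l.getD k' 0 := by
  rcases eq_or_lt_of_le h with rfl | h
  · exact le_refl _
  · rw [List.getD_eq_getElem _ _ (h.trans h'), List.getD_eq_getElem _ _ h']
    exact List.pairwise_iff_getElem.mp hl k k' _ _ h

lemma getD_map_range (c0 : ℕ) (g : ℕ → ℕ) (s : ℕ) (hs : s < c0) :
    ((List.range c0).map g).getD s 0 = g s := by
  rw [List.getD_eq_getElem _ _ (by simpa using hs)]
  simp

lemma pair_sorted_aux (q d r : ℕ) (hr : r < q) (l : List ℕ)
    (hlsort : l.Pairwise (· ≤ ·)) (hlen : l.length = q * d + r)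
    (i j ci cj : ℕ) (hij : i < j) (hjq : j < q)
    (hci : ci = if i < r then d + 1 else d) (hcj : cj = if j < r then d + 1 else d) :
    IsSortedPair
      (((List.range ci).map (fun s => l.getD (s * q + i) 0) : List ℕ) : Multiset ℕ)
      (((List.range cj).map (fun s => l.getD (s * q + j) 0) : List ℕ) : Multiset ℕ) := by
  set A := (List.range ci).map (fun s => l.getD (s * q + i) 0) with hA_def
  set B := (List.range cj).map (fun s => l.getD (s * q + j) 0) with hB_def
  have hA : A.length = ci := by simp [hA_def]
  have hB : B.length = cj := by simp [hB_def]
  have hcji : cj ≤ ci := by rw [hci, hcj]; split_ifs <;> omega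
  have hcij : ci ≤ cj + 1 := by rw [hci, hcj]; split_ifs <;> omega
  have hBA : B.length ≤ A.length := by omega
  have hABl : A.length ≤ B.length + 1 := by omega
  have hW : ∀ t, t < ci + cj →
      (interleave A B).getD t 0 = l.getD (t / 2 * q + (if Even t then i else j)) 0 ∧
      t / 2 * q + (if Even t then i else j) < l.length := by
    intro t ht
    by_cases het : Even t
    · have het' := het
      rw [Nat.even_iff] at het'
      have ht2 : t / 2 < ci := by omega
      refine ⟨?_, ?_⟩
      · rw [getD_interleave 0 A B hBA hABl, if_pos het, if_pos het, hA_def]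
        exact getD_map_range _ _ _ ht2
      · rw [if_pos het, hlen]
        exact (key_lt q d r i (t / 2) hr (hij.trans hjq)).mpr (hci ▸ ht2)
    · have het' := het
      rw [Nat.even_iff] at het'
      have ht2 : t / 2 < cj := by omega
      refine ⟨?_, ?_⟩
      · rw [getD_interleave 0 A B hBA hABl, if_neg het, if_neg het, hB_def]
        exact getD_map_range _ _ _ ht2
      · rw [if_neg het, hlen]
        exact (key_lt q d r j (t / 2) hr hjq).mpr (hcj ▸ ht2)
  have hlenW : (interleave A B).length = ci + cj := by
    rw [length_interleave]; omega
  have hWsorted : List.Pairwise (· ≤ ·) (interleave A B) := by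
    refine List.pairwise_iff_getElem.mpr ?_
    intro t t' ht ht' htt'
    rw [hlenW] at ht ht'
    have h1 := hW t ht
    have h2 := hW t' ht'
    have e1 : (interleave A B)[t]'(by omega) = l.getD (t / 2 * q + (if Even t then i else j)) 0 := by
      rw [← List.getD_eq_getElem (interleave A B) 0 (by omega)]
      exact h1.1
    have e2 : (interleave A B)[t']'(by omega) = l.getD (t' / 2 * q + (if Even t' then i else j)) 0 := by
      rw [← List.getD_eq_getElem (interleave A B) 0 (by omega)]
      exact h2.1
    rw [e1, e2]
    exact getD_mono hlsort (pos_mono q i j hij hjq htt') h2.2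
  have hperm : Multiset.sort ((A : Multiset ℕ) + (B : Multiset ℕ)) (· ≤ ·) = interleave A B := by
    refine List.Perm.eq_of_pairwise' (Multiset.pairwise_sort _ _) hWsorted ?_
    refine Multiset.coe_eq_coe.mp ?_
    rw [Multiset.sort_eq, coe_interleave]
  unfold IsSortedPair sortPair
  rw [hperm, altSplit_interleave A B hBA hABl]

lemma sum_count_aux (q d r : ℕ) (hr : r < q) (f : ℕ → ℕ) (a : ℕ) :
    ∑ i : Fin q, ((Finset.range (if (i : ℕ) < r then d + 1 else d)).filter
        (fun s => a = f (s * q + (i : ℕ)))).card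
      = ((Finset.range (q * d + r)).filter (fun k => a = f k)).card := by
  have hq0 : 0 < q := (Nat.zero_le r).trans_lt hr
  rw [← Finset.card_sigma]
  refine Finset.card_bij' (fun p _ => p.2 * q + (p.1 : ℕ))
    (fun k _ => ⟨⟨k % q, Nat.mod_lt _ hq0⟩, k / q⟩) ?_ ?_ ?_ ?_
  · rintro ⟨i, s⟩ hp
    simp only [Finset.mem_sigma, Finset.mem_univ, Finset.mem_filter, Finset.mem_range,
      true_and] at hp ⊢
    exact ⟨(key_lt q d r i s hr i.isLt).mpr hp.1, hp.2⟩
  · intro k hk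
    simp only [Finset.mem_filter, Finset.mem_range] at hk
    simp only [Finset.mem_sigma, Finset.mem_univ, Finset.mem_filter, Finset.mem_range, true_and]
    have hdm : k / q * q + k % q = k := by
      rw [Nat.mul_comm]; exact Nat.div_add_mod k q
    refine ⟨(key_lt q d r (k % q) (k / q) hr (Nat.mod_lt _ hq0)).mp ?_, ?_⟩
    · rw [hdm]; exact hk.1
    · rw [hdm]; exact hk.2
  · rintro ⟨i, s⟩ hp
    have h1 : (s * q + (i : ℕ)) % q = (i : ℕ) := by
      rw [Nat.mul_add_mod', Nat.mod_eq_of_lt i.isLt]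
    have h2 : (s * q + (i : ℕ)) / q = s := by
      rw [Nat.mul_comm s q, Nat.mul_add_div hq0, Nat.div_eq_of_lt i.isLt, Nat.add_zero]
    simp only [Sigma.ext_iff, Fin.ext_iff]
    exact ⟨by simp [h1], by simp [h2]⟩
  · intro k hk
    show k / q * q + k % q = k
    rw [Nat.mul_comm]; exact Nat.div_add_mod k q

/-- Let `u_1, …, u_q` be monomials with `m = Σ deg u_i = q*d + r`, `0 ≤ r < q`.
Write `u_1 ⋯ u_q = x_{k_1} ⋯ x_{k_m}` with `k_1 ≤ ⋯ ≤ k_m` (0-indexed below), and set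
`u'_i = ∏_{s=0}^{d} x_{k_{s q + i}}` for the first `r` indices and
`u'_i = ∏_{s=0}^{d-1} x_{k_{s q + i}}` for the remaining ones. Then `(u'_1, …, u'_q)` is
sorted of type `(d,r)` and `u'_1 ⋯ u'_q = u_1 ⋯ u_q`. -/
theorem sorted_tuple_construction (q d r : ℕ) (hr : r < q)
    (u : Fin q → Multiset ℕ)
    (hm : ∑ i, Multiset.card (u i) = q * d + r)
    (l : List ℕ) (hl : l = (∑ i, u i).sort (· ≤ ·))
    (u' : Fin q → Multiset ℕ)
    (hu' : ∀ i : Fin q, u' i =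
      ((List.range (if (i : ℕ) < r then d + 1 else d)).map
        (fun s => l.getD (s * q + (i : ℕ)) 0) : List ℕ)) :
    IsSortedOfType u' d r ∧ ∑ i, u' i = ∑ i, u i := by
  have hq0 : 0 < q := (Nat.zero_le r).trans_lt hr
  have hlsort : l.Pairwise (· ≤ ·) := by rw [hl]; exact Multiset.pairwise_sort _ _
  have hlcoe : (↑l : Multiset ℕ) = ∑ i, u i := by rw [hl]; exact Multiset.sort_eq _ _
  have hlen : l.length = q * d + r := by
    have h := congrArg Multiset.card hlcoe
    simpa [← hm] using h
  have hsum : ∑ i, u' i = ∑ i, u i := by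
    rw [← hlcoe]
    have hlself : l = (List.range (q * d + r)).map (fun k => l.getD k 0) := by
      apply List.ext_getElem
      · simp [hlen]
      · intro n h1 h2
        simp only [List.getElem_map, List.getElem_range]
        rw [List.getD_eq_getElem _ _ h1]
    ext a
    rw [Multiset.count_sum']
    have hterm : ∀ (cc : ℕ) (g : ℕ → ℕ),
        Multiset.count a (↑((List.range cc).map g) : Multiset ℕ)
          = ((Finset.range cc).filter (fun s => a = g s)).card := by
      intro cc g
      rw [← Multiset.map_coe, Multiset.count_map]
      rfl
    calc ∑ i, Multiset.count a (u' i)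
        = ∑ i : Fin q, ((Finset.range (if (i : ℕ) < r then d + 1 else d)).filter
            (fun s => a = l.getD (s * q + (i : ℕ)) 0)).card := by
          refine Finset.sum_congr rfl fun i _ => ?_
          rw [hu' i]; exact hterm _ _
      _ = ((Finset.range (q * d + r)).filter (fun k => a = l.getD k 0)).card :=
          sum_count_aux q d r hr (fun k => l.getD k 0) a
      _ = Multiset.count a (↑((List.range (q * d + r)).map (fun k => l.getD k 0)) : Multiset ℕ) :=
          (hterm (q * d + r) (fun k => l.getD k 0)).symm
      _ = Multiset.count a ↑l := by rw [← hlself]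
  refine ⟨⟨?_, ?_⟩, hsum⟩
  · intro i j hij
    rw [hu' i, hu' j]
    exact pair_sorted_aux q d r hr l hlsort hlen i j _ _ hij j.isLt rfl rfl
  · intro i
    rw [hu' i]
    simp
end

section
/- Let (u_1,…,u_q) be an arbitrary q-tuple of monomials in S = K[x_1,…,x_n] and let m = Σ_{i=1}^q deg(u_i). Then there exists a unique sorted q-tuple (u'_1,…,u'_q) of monomials such that u_1⋯u_q = u'_1⋯u'_q. Moreover this unique sorted q-tuple is of type (d,r), where d and r are the unique integers with m = qd + r and 0 ≤ r < q. -/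
def itl {α : Type*} : List α → List α → List α
  | [], l => l
  | a :: l1, l2 => a :: itl l2 l1
termination_by l1 l2 => l1.length + l2.length

def pickEvery {α : Type*} (q : ℕ) : List α → List α
  | [] => []
  | a :: l => a :: pickEvery q (l.drop (q-1))
termination_by l => l.length
decreasing_by simp [List.length_drop]

theorem itl_perm {α : Type*} (l1 l2 : List α) : List.Perm (itl l1 l2) (l1 ++ l2) := by
  induction l1, l2 using itl.induct with
  | case1 l => simp [itl]
  | case2 a l1 l2 ih =>
    rw [itl]
    exact (ih.cons a).trans (by simpa using (List.perm_append_comm.cons a))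

theorem altSplit_perm {α : Type*} (l : List α) : List.Perm ((altSplit l).1 ++ (altSplit l).2) l := by
  induction l with
  | nil => simp [altSplit]
  | cons a l ih =>
    simp only [altSplit]
    exact ((List.perm_append_comm).cons a).trans (ih.cons a)

theorem altSplit_itl {α : Type*} (l1 l2 : List α) (h2 : l2.length ≤ l1.length)
    (h1 : l1.length ≤ l2.length + 1) : altSplit (itl l1 l2) = (l1, l2) := by
  induction l1, l2 using itl.induct with
  | case1 l =>
    simp at h2; subst h2; simp [itl, altSplit]
  | case2 a l1 l2 ih =>
    simp at h1 h2
    rw [itl, altSplit, ih (by omega) (by omega)]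

theorem altSplit_countP {α : Type*} (p : α → Bool) (l1 l2 : List α)
    (h1 : ∀ a ∈ l1, p a) (h2 : ∀ a ∈ l2, ¬ p a) :
    (altSplit (l1 ++ l2)).1.countP p = (l1.length + 1)/2 ∧
    (altSplit (l1 ++ l2)).2.countP p = l1.length/2 := by
  induction l1 generalizing l2 with
  | nil =>
    constructor <;>
    · simp only [List.nil_append, List.length_nil]
      rw [List.countP_eq_zero]
      intro a ha
      refine h2 a ?_
      refine (altSplit_perm l2).mem_iff.mp ?_
      simp only [List.mem_append]
      tauto
  | cons a l1 ih =>
    obtain ⟨e1, e2⟩ := ih l2 (fun b hb => h1 b (by simp [hb])) h2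
    simp only [List.cons_append, altSplit, List.countP_cons, h1 a (by simp), if_pos,
      List.length_cons, List.append_eq, e1, e2]
    exact ⟨by omega, trivial⟩

theorem sorted_dropWhile {α : Type*} [LinearOrder α] (x : α) (l : List α)
    (hs : l.Pairwise (· ≤ ·)) : ∀ a ∈ l.dropWhile (fun b => decide (b ≤ x)), ¬ a ≤ x := by
  induction l with
  | nil => simp
  | cons b l ih =>
    by_cases hb : b ≤ x
    · rw [List.dropWhile_cons_of_pos (by simpa using hb)]
      exact ih hs.of_cons
    · rw [List.dropWhile_cons_of_neg (by simpa using hb)]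
      intro a ha
      rcases List.mem_cons.mp ha with rfl | ha
      · exact hb
      · exact fun h => hb (le_trans (List.rel_of_pairwise_cons hs ha) h)

theorem div_eq_helper {q k m : ℕ} (h1 : k*q ≤ m) (h2 : m < (k+1)*q) : m/q = k :=
  Nat.div_eq_of_lt_le h1 h2

theorem pickEvery_length {α : Type*} (q : ℕ) (hq : 0 < q) (l : List α) :
    (pickEvery q l).length = (l.length + q - 1) / q := by
  induction l using pickEvery.induct q with
  | case1 =>
    simp only [pickEvery, List.length_nil, Nat.zero_add]
    rw [Nat.div_eq_of_lt (by omega)]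
  | case2 a l ih =>
    rw [pickEvery]
    simp only [List.length_drop] at ih
    simp only [List.length_cons, ih]
    rcases Nat.lt_or_ge l.length (q-1) with h | h
    · rw [show l.length - (q-1) = 0 from by omega]
      rw [show 0 + q - 1 = q - 1 from by omega]
      rw [Nat.div_eq_of_lt (by omega)]
      rw [div_eq_helper (k := 1) (by omega) (by omega)]
    · have e1 : l.length - (q-1) + q - 1 = l.length := by omega
      have e2 : l.length + 1 + q - 1 = l.length + q := by omega
      rw [e1, e2, Nat.add_div_right _ hq]

theorem pickEvery_sublist {α : Type*} (q : ℕ) (l : List α) :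
    (pickEvery q l).Sublist l := by
  induction l using pickEvery.induct q with
  | case1 => simp [pickEvery]
  | case2 a l ih =>
    rw [pickEvery]
    exact (ih.trans (List.drop_sublist _ _)).cons₂ a

theorem pickEvery_sum {α : Type*} (q : ℕ) (l : List α) :
    ∑ i : Fin (q+1), (↑(pickEvery (q+1) (l.drop (i : ℕ))) : Multiset α) = ↑l := by
  induction l with
  | nil => simp [pickEvery]
  | cons a M ih =>
    rw [Fin.sum_univ_succ]
    have h0 : pickEvery (q+1) ((a :: M).drop ((0 : Fin (q+1)) : ℕ))
        = a :: pickEvery (q+1) (M.drop q) := by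
      rw [Fin.val_zero, List.drop_zero, pickEvery]; simp
    have hs : ∀ i : Fin q, pickEvery (q+1) ((a :: M).drop ((i.succ : Fin (q+1)) : ℕ))
        = pickEvery (q+1) (M.drop (i : ℕ)) := by
      intro i; rw [Fin.val_succ, List.drop_succ_cons]
    rw [h0]
    simp only [hs]
    have hM : (↑M : Multiset α) = (∑ i : Fin q, (↑(pickEvery (q+1) (M.drop (i:ℕ))) : Multiset α))
        + ↑(pickEvery (q+1) (M.drop q)) := by
      rw [← ih, Fin.sum_univ_castSucc]; simp
    rw [← Multiset.cons_coe, ← Multiset.cons_coe, hM, Multiset.cons_add, add_comm]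

theorem itl_pick_sublist_aux {α : Type*} (q : ℕ) (n : ℕ) :
    ∀ (l : List α), l.length ≤ n → ∀ i j : ℕ, i < j → j < i + q →
    (itl (pickEvery q (l.drop i)) (pickEvery q (l.drop j))).Sublist l := by
  induction n with
  | zero =>
    intro l hl i j _ _
    obtain rfl : l = [] := List.length_eq_zero_iff.mp (by omega)
    simp [itl, pickEvery]
  | succ n ih =>
    intro l hl i j hij hjq
    by_cases hd : l.drop i = []
    · rw [hd]
      simp only [pickEvery, itl]
      exact (pickEvery_sublist q _).trans (List.drop_sublist _ _)
    · have hi : i < l.length := by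
        by_contra h
        exact hd (List.drop_eq_nil_iff.mpr (by omega))
      have hq1 : 1 ≤ q := by omega
      rw [List.drop_eq_getElem_cons hi, pickEvery, itl]
      have e1 : List.drop (q-1) (List.drop (i+1) l) = List.drop (i+q) l := by
        rw [List.drop_drop]
        congr 1
        omega
      have e2 : List.drop j l = List.drop (j-(i+1)) (List.drop (i+1) l) := by
        rw [List.drop_drop]
        congr 1
        omega
      have e3 : List.drop (i+q) l = List.drop (q-1) (List.drop (i+1) l) := by
        rw [List.drop_drop]
        congr 1
        omega
      rw [e1, e3, e2]
      have hX := ih (l.drop (i+1)) (by simp; omega) (j-(i+1)) (q-1) (by omega) (by omega)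
      have : (l[i] :: itl (pickEvery q (List.drop (j-(i+1)) (l.drop (i+1))))
          (pickEvery q (List.drop (q-1) (l.drop (i+1))))).Sublist (l[i] :: l.drop (i+1)) :=
        hX.cons₂ _
      exact (this.trans (by rw [← List.drop_eq_getElem_cons hi]; exact List.drop_sublist _ _))

theorem sorted_pair_of_interleave {α : Type*} [LinearOrder α] (l1 l2 : List α)
    (hs : (itl l1 l2).Pairwise (· ≤ ·)) (h2 : l2.length ≤ l1.length)
    (h1 : l1.length ≤ l2.length + 1) : IsSortedPair (↑l1 : Multiset α) (↑l2 : Multiset α) := by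
  unfold IsSortedPair sortPair
  have hsort : (((↑l1 : Multiset α) + ↑l2).sort (· ≤ ·)) = itl l1 l2 := by
    apply List.Perm.eq_of_pairwise' (Multiset.pairwise_sort _ _) hs ?_
    rw [← Multiset.coe_eq_coe, Multiset.sort_eq]
    have h := Multiset.coe_eq_coe.mpr (itl_perm l1 l2)
    rw [h]
    rfl
  rw [hsort, altSplit_itl l1 l2 h2 h1]

theorem isSortedPair_eq {u v : Multiset ℕ} (h : IsSortedPair u v) :
    u = ↑(altSplit ((u+v).sort (· ≤ ·))).1 ∧ v = ↑(altSplit ((u+v).sort (· ≤ ·))).2 := by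
  unfold IsSortedPair sortPair at h
  exact ⟨congrArg Prod.fst h.symm, congrArg Prod.snd h.symm⟩

theorem isSortedPair_countP {u v : Multiset ℕ} (h : IsSortedPair u v) (x : ℕ) :
    u.countP (· ≤ x) = ((u+v).countP (· ≤ x) + 1)/2 ∧
    v.countP (· ≤ x) = ((u+v).countP (· ≤ x))/2 := by
  obtain ⟨hu, hv⟩ := isSortedPair_eq h
  set L := (u+v).sort (· ≤ ·) with hLdef
  have hcoe : (↑L : Multiset ℕ) = u + v := Multiset.sort_eq _ _
  have hsorted : L.Pairwise (· ≤ ·) := Multiset.pairwise_sort _ _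
  set p : ℕ → Bool := fun a => decide (a ≤ x) with hp
  have h1 : ∀ a ∈ L.takeWhile p, p a := fun a ha => List.mem_takeWhile_imp ha
  have h2 : ∀ a ∈ L.dropWhile p, ¬ p a := by
    intro a ha
    simpa [hp] using sorted_dropWhile x L hsorted a ha
  have hsplit : L.takeWhile p ++ L.dropWhile p = L := List.takeWhile_append_dropWhile
  have key := altSplit_countP p (L.takeWhile p) (L.dropWhile p) h1 h2
  rw [hsplit] at key
  have hLcount : L.countP p = (L.takeWhile p).length := by
    rw [← hsplit, List.countP_append, List.countP_eq_length.mpr h1,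
      List.countP_eq_zero.mpr h2, List.takeWhile_append_dropWhile]
    omega
  have hUV : (u+v).countP (· ≤ x) = (L.takeWhile p).length := by
    rw [← hcoe, Multiset.coe_countP, hLcount]
  have cu : u.countP (· ≤ x) = List.countP p (altSplit L).1 := by
    rw [hu, Multiset.coe_countP]
  have cv : v.countP (· ≤ x) = List.countP p (altSplit L).2 := by
    rw [hv, Multiset.coe_countP]
  rw [cu, cv, hUV, key.1, key.2]
  exact ⟨rfl, rfl⟩

theorem countP_le_ext {s t : Multiset ℕ} (h : ∀ x, s.countP (· ≤ x) = t.countP (· ≤ x)) :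
    s = t := by
  have hstep : ∀ (s : Multiset ℕ) (a : ℕ),
      s.countP (· ≤ a+1) = s.countP (· ≤ a) + s.count (a+1) := by
    intro s a
    induction s using Multiset.induction_on with
    | empty => simp
    | cons b s ih =>
      rw [Multiset.countP_cons, Multiset.countP_cons, Multiset.count_cons, ih]
      split_ifs <;> omega
  have h0 : ∀ (s : Multiset ℕ), s.count 0 = s.countP (· ≤ 0) := by
    intro s
    rw [Multiset.count, Multiset.countP_congr rfl (p' := (· ≤ 0))]
    rintro a -
    simp [eq_comm]
  ext a
  cases a with
  | zero => rw [h0, h0, h 0]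
  | succ a =>
    have h1 := hstep s a
    have h2 := hstep t a
    rw [h a, h (a+1)] at h1
    omega

theorem countP_finset_sum {ι : Type*} (s : Finset ι) (f : ι → Multiset ℕ) (x : ℕ) :
    (∑ j ∈ s, f j).countP (· ≤ x) = ∑ j ∈ s, (f j).countP (· ≤ x) := by
  induction s using Finset.cons_induction with
  | empty => simp
  | cons a s ha ih => simp [Multiset.countP_add, ih]

theorem distrib_eq {q : ℕ} (hq : 0 < q) (c : Fin q → ℕ)
    (hstep : ∀ i j : Fin q, i < j → c j ≤ c i ∧ c i ≤ c j + 1) (S : ℕ)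
    (hS : ∑ i, c i = S) :
    ∀ i : Fin q, c i = if (i:ℕ) < S % q then S / q + 1 else S / q := by
  set last : Fin q := ⟨q-1, by omega⟩ with hlastdef
  set b := c last with hb
  have hbounds : ∀ i, b ≤ c i ∧ c i ≤ b + 1 := by
    intro i
    rcases eq_or_lt_of_le (show (i:ℕ) ≤ (last:ℕ) from by simp [hlastdef]; omega) with h | h
    · rw [show i = last from Fin.ext h]
      omega
    · have := hstep i last h
      omega
  set T := Finset.univ.filter (fun i => c i = b + 1) with hT
  set t := T.card with ht
  have hdown : ∀ i j : Fin q, i ≤ j → j ∈ T → i ∈ T := by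
    intro i j hij hj
    simp only [hT, Finset.mem_filter, Finset.mem_univ, true_and] at hj ⊢
    rcases eq_or_lt_of_le hij with h | h
    · rw [h]; exact hj
    · have h1 := hstep i j h
      have h2 := hbounds i
      omega
  have hiff : ∀ i : Fin q, i ∈ T ↔ (i:ℕ) < t := by
    intro i
    constructor
    · intro hi
      have hsub : Finset.Iic i ⊆ T := fun j hj => hdown j i (Finset.mem_Iic.mp hj) hi
      have := Finset.card_le_card hsub
      rw [Fin.card_Iic] at this
      omega
    · intro hi
      by_contra hni
      have hsub : T ⊆ Finset.Iio i := by
        intro j hj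
        rw [Finset.mem_Iio]
        by_contra hji
        exact hni (hdown i j (le_of_not_gt hji) hj)
      have := Finset.card_le_card hsub
      rw [Fin.card_Iio] at this
      omega
  have hlastT : last ∉ T := by
    simp only [hT, Finset.mem_filter, Finset.mem_univ, true_and, ← hb]
    omega
  have htq : t < q := by
    have hh : ¬ ((last:ℕ) < t) := fun hc => hlastT ((hiff last).mpr hc)
    have : (last:ℕ) = q - 1 := rfl
    omega
  have hsum : S = q * b + t := by
    rw [← hS]
    have : ∀ i : Fin q, c i = b + (if i ∈ T then 1 else 0) := by
      intro i
      by_cases hi : i ∈ T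
      · simp only [hi, if_true]
        simp only [hT, Finset.mem_filter, Finset.mem_univ, true_and] at hi
        omega
      · simp only [hi, if_false]
        have h2 := hbounds i
        simp only [hT, Finset.mem_filter, Finset.mem_univ, true_and] at hi
        omega
    rw [Finset.sum_congr rfl (fun i _ => this i), Finset.sum_add_distrib,
      Finset.sum_const, Finset.card_univ, Fintype.card_fin, smul_eq_mul]
    congr 1
    rw [Finset.sum_ite_mem, Finset.univ_inter, Finset.sum_const, smul_eq_mul, mul_one]
  have hmod : S % q = t := by
    rw [hsum, Nat.mul_add_mod, Nat.mod_eq_of_lt htq]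
  have hdiv : S / q = b := by
    rw [hsum, Nat.mul_add_div hq, Nat.div_eq_of_lt htq, add_zero]
  intro i
  rw [hmod, hdiv]
  by_cases hi : (i:ℕ) < t
  · rw [if_pos hi]
    have := (hiff i).mpr hi
    simp only [hT, Finset.mem_filter, Finset.mem_univ, true_and] at this
    omega
  · rw [if_neg hi]
    have hni := (hiff i).not.mpr hi
    have h2 := hbounds i
    simp only [hT, Finset.mem_filter, Finset.mem_univ, true_and] at hni
    omega

theorem tuple_countP {q : ℕ} (hq : 0 < q) (v : Fin q → Multiset ℕ) (hv : IsSortedTuple v)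
    (x : ℕ) (i : Fin q) :
    (v i).countP (· ≤ x) =
      if (i:ℕ) < ((∑ j, v j).countP (· ≤ x)) % q
      then ((∑ j, v j).countP (· ≤ x)) / q + 1
      else ((∑ j, v j).countP (· ≤ x)) / q := by
  have hstep : ∀ i j : Fin q, i < j →
      (v j).countP (· ≤ x) ≤ (v i).countP (· ≤ x) ∧
      (v i).countP (· ≤ x) ≤ (v j).countP (· ≤ x) + 1 := by
    intro i j hij
    have h := isSortedPair_countP (hv i j hij) x
    rw [Multiset.countP_add] at h
    omega
  have hsum : ∑ j, (v j).countP (· ≤ x) = (∑ j, v j).countP (· ≤ x) :=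
    (countP_finset_sum _ _ _).symm
  exact distrib_eq hq (fun j => (v j).countP (· ≤ x)) hstep _ hsum i

theorem card_finset_sum {ι : Type*} (s : Finset ι) (f : ι → Multiset ℕ) :
    Multiset.card (∑ j ∈ s, f j) = ∑ j ∈ s, Multiset.card (f j) := by
  induction s using Finset.cons_induction with
  | empty => simp
  | cons a s ha ih => simp [ih]


/-- Lemma 1.1: For an arbitrary `q`-tuple `(u_1, …, u_q)` of monomials with
`m = Σ deg u_i`, there exists a unique sorted `q`-tuple `(u'_1, …, u'_q)` with
`u_1 ⋯ u_q = u'_1 ⋯ u'_q`; moreover it is of type `(d,r)`, where `m = q*d + r`, `0 ≤ r < q`. -/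
theorem exists_unique_sorted_tuple (q d r : ℕ) (hr : r < q)
    (u : Fin q → Multiset ℕ)
    (hm : ∑ i, Multiset.card (u i) = q * d + r) :
    ∃ u' : Fin q → Multiset ℕ,
      IsSortedTuple u' ∧ (∑ i, u' i = ∑ i, u i) ∧ IsSortedOfType u' d r ∧
      ∀ v : Fin q → Multiset ℕ, IsSortedTuple v → (∑ i, v i = ∑ i, u i) → v = u' := by
  have hq : 0 < q := by omega
  set w := ∑ i, u i with hw
  set L := w.sort (· ≤ ·) with hL
  have hLcoe : (↑L : Multiset ℕ) = w := Multiset.sort_eq _ _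
  have hLsorted : L.Pairwise (· ≤ ·) := Multiset.pairwise_sort _ _
  have hLlen : L.length = q * d + r := by
    rw [hL, Multiset.length_sort, hw, card_finset_sum, hm]
  set u' : Fin q → Multiset ℕ := fun i => ↑(pickEvery q (L.drop (i : ℕ))) with hu'
  have hcard : ∀ i : Fin q, Multiset.card (u' i) = (L.length - (i:ℕ) + q - 1) / q := by
    intro i
    rw [hu']
    simp only [Multiset.coe_card, pickEvery_length q hq, List.length_drop]
  have hsum : ∑ i, u' i = w := by
    obtain ⟨q', rfl⟩ : ∃ q', q = q' + 1 := ⟨q - 1, by omega⟩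
    exact (pickEvery_sum q' L).trans hLcoe
  have hsortedTuple : IsSortedTuple u' := by
    intro i j hij
    have hij' : (i:ℕ) < (j:ℕ) := hij
    have hjq : (j:ℕ) < (i:ℕ) + q := by omega
    have hsub := itl_pick_sublist_aux q L.length L le_rfl (i:ℕ) (j:ℕ) hij' hjq
    apply sorted_pair_of_interleave _ _ (List.Pairwise.sublist hsub hLsorted)
    · rw [pickEvery_length q hq, pickEvery_length q hq, List.length_drop, List.length_drop]
      exact Nat.div_le_div_right (by omega)
    · rw [pickEvery_length q hq, pickEvery_length q hq, List.length_drop, List.length_drop]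
      have h1 : L.length - (i:ℕ) + q - 1 ≤ L.length - (j:ℕ) + q - 1 + q := by omega
      calc (L.length - (i:ℕ) + q - 1) / q ≤ (L.length - (j:ℕ) + q - 1 + q) / q :=
            Nat.div_le_div_right h1
        _ = (L.length - (j:ℕ) + q - 1) / q + 1 := Nat.add_div_right _ hq
  have htype : ∀ i : Fin q, Multiset.card (u' i) = if (i:ℕ) < r then d + 1 else d := by
    intro i
    rw [hcard i, hLlen]
    have hiq : (i:ℕ) < q := i.isLt
    by_cases hir : (i:ℕ) < r
    · rw [if_pos hir]
      have e : q * d + r - (i:ℕ) + q - 1 = q * (d+1) + (r - (i:ℕ) - 1) := by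
        rw [Nat.mul_succ]; omega
      rw [e, Nat.mul_add_div hq, Nat.div_eq_of_lt (by omega), add_zero]
    · rw [if_neg hir]
      by_cases hd : q * d + r ≤ (i:ℕ)
      · have hd0 : d = 0 := by
          rcases d with _ | d'
          · rfl
          · rw [Nat.mul_succ] at hd; omega
        subst hd0
        simp only [Nat.mul_zero, Nat.zero_add] at hd ⊢
        rw [Nat.div_eq_of_lt (by omega)]
      · have e : q * d + r - (i:ℕ) + q - 1 = q * d + (r + q - 1 - (i:ℕ)) := by omega
        rw [e, Nat.mul_add_div hq, Nat.div_eq_of_lt (by omega), add_zero]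
  refine ⟨u', hsortedTuple, hsum, ⟨hsortedTuple, htype⟩, ?_⟩
  intro v hv hvsum
  funext i
  apply countP_le_ext
  intro x
  have h1 := tuple_countP hq v hv x i
  have h2 := tuple_countP hq u' hsortedTuple x i
  rw [hsum] at h2
  rw [hvsum] at h1
  rw [h1, h2]
end

section
/- Let (u_1,…,u_q) be an arbitrary q-tuple of monomials in S = K[x_1,…,x_n]. Then the unique sorted q-tuple sort(u_1,…,u_q) (the unique sorted q-tuple with the same product u_1⋯u_q) can be obtained from (u_1,…,u_q) by a finite number of single sorting steps; that is, (u_1,…,u_q) is related to sort(u_1,…,u_q) by the reflexive–transitive closure of the single sorting step relation. -/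
/-- A single sorting step on a `q`-tuple: choose `i < j` with `(w_i, w_j)` unsorted and replace
`(w_i, w_j)` by `sort(w_i, w_j)`, leaving the other entries unchanged. -/
def SortStep {α : Type*} [LinearOrder α] {q : ℕ} (w w' : Fin q → Multiset α) : Prop :=
  ∃ i j : Fin q, i < j ∧ ¬ IsSortedPair (w i) (w j) ∧
    w' i = (sortPair (w i) (w j)).1 ∧ w' j = (sortPair (w i) (w j)).2 ∧
    ∀ k : Fin q, k ≠ i → k ≠ j → w' k = w k

namespace SP
open Multiset Finset

abbrev pc (a : ℕ) (m : Multiset ℕ) : ℕ := Multiset.card (m.filter (· ≤ a))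

lemma pc_add (a : ℕ) (m m' : Multiset ℕ) : pc a (m + m') = pc a m + pc a m' := by
  simp [pc]

lemma pc_card_le (a : ℕ) (m : Multiset ℕ) : pc a m ≤ Multiset.card m :=
  Multiset.card_le_card (Multiset.filter_le _ _)

lemma pc_cons (a x : ℕ) (m : Multiset ℕ) :
    pc a (x ::ₘ m) = (if x ≤ a then 1 else 0) + pc a m := by
  simp only [pc, Multiset.filter_cons]
  split <;> simp <;> omega

lemma altSplit_perm {α : Type*} (L : List α) : ((altSplit L).1 ++ (altSplit L).2).Perm L := by
  induction L with
  | nil => simp [altSplit]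
  | cons x l ih =>
    simpa [altSplit] using (List.perm_append_comm.cons x).trans (ih.cons x)

lemma altSplit_coe (L : List ℕ) : (↑(altSplit L).1 : Multiset ℕ) + ↑(altSplit L).2 = ↑L := by
  have h := altSplit_perm L
  have := Multiset.coe_eq_coe.mpr h
  simpa using this

lemma altSplit_pc : ∀ (L : List ℕ), L.Pairwise (· ≤ ·) → ∀ a : ℕ,
    pc a ↑(altSplit L).1 = (pc a (↑L : Multiset ℕ) + 1) / 2 ∧
    pc a ↑(altSplit L).2 = pc a (↑L : Multiset ℕ) / 2 := by
  intro L
  induction L with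
  | nil => intro _ a; simp [altSplit, pc]
  | cons x l ih =>
    intro hs a
    obtain ⟨hx, hl⟩ := List.pairwise_cons.mp hs
    obtain ⟨h1, h2⟩ := ih hl a
    have hc1 : ((x :: l : List ℕ) : Multiset ℕ) = x ::ₘ (↑l : Multiset ℕ) := by
      simp [Multiset.cons_coe]
    have hc2 : ((x :: (altSplit l).2 : List ℕ) : Multiset ℕ)
        = x ::ₘ (↑(altSplit l).2 : Multiset ℕ) := by simp [Multiset.cons_coe]
    by_cases hxa : x ≤ a
    · simp only [altSplit, hc1, hc2, pc_cons, if_pos hxa]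
      omega
    · have hech : pc a (↑l : Multiset ℕ) = 0 := by
        simp only [pc, Multiset.card_eq_zero]
        rw [Multiset.filter_eq_nil]
        intro b hb hba
        exact hxa (le_trans (hx b (by simpa using hb)) hba)
      simp only [altSplit, hc1, hc2, pc_cons, if_neg hxa]
      omega

lemma sortPair_pc (u v : Multiset ℕ) (a : ℕ) :
    pc a (sortPair u v).1 = (pc a u + pc a v + 1) / 2 ∧
    pc a (sortPair u v).2 = (pc a u + pc a v) / 2 := by
  have h := altSplit_pc ((u + v).sort (· ≤ ·)) (Multiset.pairwise_sort _ _) a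
  rw [Multiset.sort_eq, pc_add] at h
  exact h

lemma sortPair_add (u v : Multiset ℕ) :
    (sortPair u v).1 + (sortPair u v).2 = u + v := by
  have h := altSplit_coe ((u + v).sort (· ≤ ·))
  rw [Multiset.sort_eq] at h
  exact h

lemma pc_zero (m : Multiset ℕ) : pc 0 m = m.count 0 := by
  induction m using Multiset.induction with
  | empty => simp [pc]
  | cons x m ih =>
    rw [pc_cons, Multiset.count_cons, ih]
    split_ifs <;> omega

lemma pc_succ (a : ℕ) (m : Multiset ℕ) : pc (a + 1) m = pc a m + m.count (a + 1) := by
  induction m using Multiset.induction with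
  | empty => simp [pc]
  | cons x m ih =>
    rw [pc_cons, pc_cons, Multiset.count_cons, ih]
    split_ifs <;> omega

lemma pc_ext {m m' : Multiset ℕ} (h : ∀ a, pc a m = pc a m') : m = m' := by
  ext b
  cases b with
  | zero => rw [← pc_zero, ← pc_zero, h]
  | succ a =>
    have h1 := pc_succ a m
    have h2 := pc_succ a m'
    have h3 := h a
    have h4 := h (a + 1)
    omega

lemma isSortedPair_iff (u v : Multiset ℕ) :
    IsSortedPair u v ↔ ∀ a, pc a v ≤ pc a u ∧ pc a u ≤ pc a v + 1 := by
  constructor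
  · intro h a
    have h1 := (sortPair_pc u v a).1
    have h2 := (sortPair_pc u v a).2
    rw [h] at h1 h2
    simp only at h1 h2
    omega
  · intro h
    have e1 : (sortPair u v).1 = u := pc_ext (fun a => by
      have h1 := (sortPair_pc u v a).1
      have h2 := h a
      omega)
    have e2 : (sortPair u v).2 = v := pc_ext (fun a => by
      have h1 := (sortPair_pc u v a).2
      have h2 := h a
      omega)
    unfold IsSortedPair
    exact Prod.ext e1 e2

end SP

namespace SP
open Multiset Finset

lemma pc_sum {ι : Type*} (t : Finset ι) (f : ι → Multiset ℕ) (a : ℕ) :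
    pc a (∑ i ∈ t, f i) = ∑ i ∈ t, pc a (f i) := by
  classical
  induction t using Finset.induction with
  | empty => simp [pc]
  | insert _ _ h ih => rw [Finset.sum_insert h, Finset.sum_insert h, pc_add, ih]

lemma sum_split {M : Type*} [AddCommMonoid M] {q : ℕ} (i j : Fin q) (hij : i ≠ j)
    (g : Fin q → M) :
    ∑ k, g k = g i + g j + ∑ k ∈ (Finset.univ.erase i).erase j, g k := by
  have hj : j ∈ Finset.univ.erase i := by simp [Finset.mem_erase, hij.symm]
  rw [← Finset.add_sum_erase _ g (Finset.mem_univ i), ← Finset.add_sum_erase _ g hj,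
    add_assoc]

lemma sum_pair_swap {M : Type*} [AddCommMonoid M] {q : ℕ} (i j : Fin q) (hij : i ≠ j)
    (f f' : Fin q → M) (hoff : ∀ k, k ≠ i → k ≠ j → f' k = f k) :
    ∑ k, f' k + (f i + f j) = ∑ k, f k + (f' i + f' j) := by
  rw [sum_split i j hij f, sum_split i j hij f']
  have ht : ∑ k ∈ (Finset.univ.erase i).erase j, f' k
      = ∑ k ∈ (Finset.univ.erase i).erase j, f k := by
    refine Finset.sum_congr rfl fun k hk => ?_
    simp only [Finset.mem_erase] at hk
    exact hoff k hk.2.1 hk.1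
  rw [ht]
  abel

lemma sum_update_eq {q : ℕ} (i j : Fin q) (hij : i ≠ j) (f f' : Fin q → Multiset ℕ)
    (hoff : ∀ k, k ≠ i → k ≠ j → f' k = f k) (hpair : f' i + f' j = f i + f j) :
    ∑ k, f' k = ∑ k, f k := by
  have h := sum_pair_swap i j hij f f' hoff
  rw [hpair] at h
  exact add_right_cancel h

lemma bal_eq {q : ℕ} (b b' : Fin q → ℕ)
    (hb : ∀ i j : Fin q, i < j → b j ≤ b i ∧ b i ≤ b j + 1)
    (hb' : ∀ i j : Fin q, i < j → b' j ≤ b' i ∧ b' i ≤ b' j + 1)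
    (hsum : ∑ k, b k = ∑ k, b' k) (k : Fin q) : b k = b' k := by
  have key : ∀ (c c' : Fin q → ℕ),
      (∀ i j : Fin q, i < j → c j ≤ c i ∧ c i ≤ c j + 1) →
      (∀ i j : Fin q, i < j → c' j ≤ c' i ∧ c' i ≤ c' j + 1) →
      (∑ k, c k = ∑ k, c' k) → ∀ i, c i ≤ c' i := by
    intro c c' hc hc' hcs i
    by_contra hgt
    push_neg at hgt
    have hex : ∃ j, c j < c' j := by
      by_contra hall
      push_neg at hall
      have hlt := Finset.sum_lt_sum (fun k (_ : k ∈ Finset.univ) => hall k)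
        ⟨i, Finset.mem_univ i, hgt⟩
      omega
    obtain ⟨j, hj⟩ := hex
    rcases lt_trichotomy i j with h | h | h
    · have h1 := hc i j h; have h2 := hc' i j h; omega
    · subst h; omega
    · have h1 := hc j i h; have h2 := hc' j i h; omega
  exact le_antisymm (key b b' hb hb' hsum k) (key b' b hb' hb hsum.symm k)

lemma sq_drop (x y : ℕ) (h : x + 2 ≤ y) :
    ((x + y + 1) / 2) ^ 2 + ((x + y) / 2) ^ 2 + 2 ≤ x ^ 2 + y ^ 2 := by
  obtain ⟨e, he⟩ : ∃ e, y = x + 2 + 2 * e ∨ y = x + 3 + 2 * e := ⟨(y - x - 2) / 2, by omega⟩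
  rcases he with rfl | rfl
  · have h1 : (x + (x + 2 + 2 * e) + 1) / 2 = x + e + 1 := by omega
    have h2 : (x + (x + 2 + 2 * e)) / 2 = x + e + 1 := by omega
    rw [h1, h2]; nlinarith
  · have h1 : (x + (x + 3 + 2 * e) + 1) / 2 = x + e + 2 := by omega
    have h2 : (x + (x + 3 + 2 * e)) / 2 = x + e + 1 := by omega
    rw [h1, h2]; nlinarith

lemma sq_drop' (x y : ℕ) (h : x + 2 ≤ y ∨ y + 2 ≤ x) :
    ((x + y + 1) / 2) ^ 2 + ((x + y) / 2) ^ 2 + 2 ≤ x ^ 2 + y ^ 2 := by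
  rcases h with h | h
  · exact sq_drop x y h
  · have := sq_drop y x h
    have e1 : y + x = x + y := by omega
    rw [e1] at this
    omega

lemma key_le (B i j x y : ℕ) (hij : i < j)
    (hlin : i * ((x + y + 1) / 2) + j * ((x + y) / 2) < B) :
    B * ((x + y + 1) / 2) ^ 2 + i * ((x + y + 1) / 2)
      + (B * ((x + y) / 2) ^ 2 + j * ((x + y) / 2))
      ≤ B * x ^ 2 + i * x + (B * y ^ 2 + j * y) := by
  by_cases hd : x + 2 ≤ y ∨ y + 2 ≤ x
  · have h2 := sq_drop' x y hd
    nlinarith [h2, hlin, Nat.zero_le (i * x), Nat.zero_le (j * y)]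
  · have h3 : ((x + y + 1) / 2 = x ∧ (x + y) / 2 = y) ∨
        ((x + y + 1) / 2 = y ∧ (x + y) / 2 = x ∧ y = x + 1) := by omega
    rcases h3 with ⟨e1, e2⟩ | ⟨e1, e2, e3⟩
    · rw [e1, e2]
    · rw [e1, e2, e3]
      nlinarith [hij]

lemma key_lt (B i j x y : ℕ) (hij : i < j)
    (hlin : i * ((x + y + 1) / 2) + j * ((x + y) / 2) < B)
    (hviol : ¬(y ≤ x ∧ x ≤ y + 1)) :
    B * ((x + y + 1) / 2) ^ 2 + i * ((x + y + 1) / 2)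
      + (B * ((x + y) / 2) ^ 2 + j * ((x + y) / 2))
      < B * x ^ 2 + i * x + (B * y ^ 2 + j * y) := by
  by_cases hd : x + 2 ≤ y ∨ y + 2 ≤ x
  · have h2 := sq_drop' x y hd
    nlinarith [h2, hlin, Nat.zero_le (i * x), Nat.zero_le (j * y)]
  · have h3 : (x + y + 1) / 2 = y ∧ (x + y) / 2 = x ∧ y = x + 1 := by omega
    obtain ⟨e1, e2, e3⟩ := h3
    rw [e1, e2, e3]
    nlinarith [hij]

end SP

namespace SP
open Multiset Finset

def phi (q N B : ℕ) (w : Fin q → Multiset ℕ) : ℕ :=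
  ∑ a ∈ Finset.range (N + 1), ∑ k : Fin q,
    (B * (pc a (w k)) ^ 2 + (k : ℕ) * pc a (w k))

lemma exists_step {q : ℕ} (w : Fin q → Multiset ℕ) (h : ¬ IsSortedTuple w) :
    ∃ w', SortStep w w' ∧ (∑ k, w' k = ∑ k, w k) := by
  unfold IsSortedTuple at h
  push_neg at h
  obtain ⟨i, j, hij, hns⟩ := h
  have hne : i ≠ j := ne_of_lt hij
  set p := sortPair (w i) (w j) with hp
  refine ⟨Function.update (Function.update w i p.1) j p.2, ?_, ?_⟩
  · refine ⟨i, j, hij, hns, ?_, ?_, ?_⟩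
    · rw [Function.update_of_ne hne, Function.update_self]
    · rw [Function.update_self]
    · intro k hk1 hk2
      rw [Function.update_of_ne hk2, Function.update_of_ne hk1]
  · refine sum_update_eq i j hne w _ ?_ ?_
    · intro k hk1 hk2
      rw [Function.update_of_ne hk2, Function.update_of_ne hk1]
    · rw [Function.update_of_ne hne, Function.update_self, Function.update_self]
      exact sortPair_add _ _

lemma step_sum {q : ℕ} {w w' : Fin q → Multiset ℕ} (hstep : SortStep w w') :
    ∑ k, w' k = ∑ k, w k := by
  obtain ⟨i, j, hij, _, hwi, hwj, hoff⟩ := hstep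
  refine sum_update_eq i j (ne_of_lt hij) w w' hoff ?_
  rw [hwi, hwj]
  exact sortPair_add _ _

lemma step_decrease {q : ℕ} (s : Multiset ℕ) (w w' : Fin q → Multiset ℕ)
    (hs : ∑ k, w k = s) (hstep : SortStep w w') :
    phi q s.sum (q * Multiset.card s + 1) w'
      < phi q s.sum (q * Multiset.card s + 1) w := by
  obtain ⟨i, j, hij, hns, hwi, hwj, hoff⟩ := hstep
  have hne : i ≠ j := ne_of_lt hij
  set N := s.sum with hN
  set B := q * Multiset.card s + 1 with hB
  have hx' : ∀ a, pc a (w' i) = (pc a (w i) + pc a (w j) + 1) / 2 := fun a => by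
    rw [hwi]; exact (sortPair_pc _ _ a).1
  have hy' : ∀ a, pc a (w' j) = (pc a (w i) + pc a (w j)) / 2 := fun a => by
    rw [hwj]; exact (sortPair_pc _ _ a).2
  have hpair_le : w i + w j ≤ s := by
    rw [← hs, sum_split i j hne w]
    exact Multiset.le_add_right _ _
  have hcardpair : ∀ a, pc a (w i) + pc a (w j) ≤ Multiset.card s := fun a => by
    rw [← pc_add]
    exact le_trans (pc_card_le _ _) (Multiset.card_le_card hpair_le)
  have hlin : ∀ a, (i : ℕ) * ((pc a (w i) + pc a (w j) + 1) / 2)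
      + (j : ℕ) * ((pc a (w i) + pc a (w j)) / 2) < B := fun a => by
    have hiq : (i : ℕ) < q := i.isLt
    have hjq : (j : ℕ) < q := j.isLt
    set x := pc a (w i)
    set y := pc a (w j)
    have hsum2 : (x + y + 1) / 2 + (x + y) / 2 = x + y := by omega
    have hc := hcardpair a
    calc (i:ℕ) * ((x + y + 1) / 2) + (j:ℕ) * ((x + y) / 2)
        ≤ (q - 1) * ((x + y + 1) / 2) + (q - 1) * ((x + y) / 2) := by
          gcongr <;> omega
      _ = (q - 1) * ((x + y + 1) / 2 + (x + y) / 2) := by ring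
      _ ≤ (q - 1) * Multiset.card s := by
          refine Nat.mul_le_mul_left _ ?_
          omega
      _ < B := by
          rw [hB]
          have : (q - 1) * Multiset.card s ≤ q * Multiset.card s :=
            Nat.mul_le_mul_right _ (by omega)
          omega
  set f : ℕ → Fin q → ℕ :=
    fun a k => B * (pc a (w k)) ^ 2 + (k : ℕ) * pc a (w k) with hf
  set f' : ℕ → Fin q → ℕ :=
    fun a k => B * (pc a (w' k)) ^ 2 + (k : ℕ) * pc a (w' k) with hf'
  have hoff' : ∀ a (k : Fin q), k ≠ i → k ≠ j → f' a k = f a k := by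
    intro a k hk1 hk2
    simp only [hf, hf', hoff k hk1 hk2]
  have hswap : ∀ a, ∑ k, f' a k + (f a i + f a j) = ∑ k, f a k + (f' a i + f' a j) :=
    fun a => sum_pair_swap i j hne (f a) (f' a) (hoff' a)
  have hvij : (i : ℕ) < (j : ℕ) := hij
  have hle : ∀ a, ∑ k, f' a k ≤ ∑ k, f a k := by
    intro a
    have hk := key_le B i j (pc a (w i)) (pc a (w j)) hvij (hlin a)
    have e1 : f' a i = B * ((pc a (w i) + pc a (w j) + 1) / 2) ^ 2
        + (i : ℕ) * ((pc a (w i) + pc a (w j) + 1) / 2) := by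
      simp only [hf', hx' a]
    have e2 : f' a j = B * ((pc a (w i) + pc a (w j)) / 2) ^ 2
        + (j : ℕ) * ((pc a (w i) + pc a (w j)) / 2) := by
      simp only [hf', hy' a]
    have hsw := hswap a
    rw [e1, e2] at hsw
    simp only [hf] at hsw hk ⊢
    omega
  obtain ⟨a0, ha0N, hviol⟩ : ∃ a0, a0 ≤ N ∧
      ¬(pc a0 (w j) ≤ pc a0 (w i) ∧ pc a0 (w i) ≤ pc a0 (w j) + 1) := by
    have hni := (isSortedPair_iff (w i) (w j)).not.mp hns
    push_neg at hni
    obtain ⟨a, ha⟩ := hni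
    have ha' : ¬(pc a (w j) ≤ pc a (w i) ∧ pc a (w i) ≤ pc a (w j) + 1) := by
      intro hcon
      rcases le_or_gt (pc a (w j)) (pc a (w i)) with h | h
      · have := ha h; omega
      · omega
    by_cases haN : a ≤ N
    · exact ⟨a, haN, ha'⟩
    · have hstab : ∀ k : Fin q, pc a (w k) = pc N (w k) := by
        intro k
        have hmem : ∀ b ∈ w k, b ≤ N := by
          intro b hb
          have hwk : w k ≤ ∑ k', w k' :=
            Finset.single_le_sum (f := w) (fun _ _ => Multiset.zero_le _)
              (Finset.mem_univ k)
          have hbs : b ∈ s := by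
            rw [← hs]; exact Multiset.mem_of_le hwk hb
          exact Multiset.single_le_sum (fun x _ => Nat.zero_le x) b hbs
        unfold pc
        rw [Multiset.filter_eq_self.mpr (fun b hb => le_trans (hmem b hb) (by omega)),
          Multiset.filter_eq_self.mpr (fun b hb => hmem b hb)]
      refine ⟨N, le_rfl, ?_⟩
      rw [← hstab i, ← hstab j]
      exact ha'
  have hlt : ∑ k, f' a0 k < ∑ k, f a0 k := by
    have hk := key_lt B i j (pc a0 (w i)) (pc a0 (w j)) hvij (hlin a0) hviol
    have e1 : f' a0 i = B * ((pc a0 (w i) + pc a0 (w j) + 1) / 2) ^ 2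
        + (i : ℕ) * ((pc a0 (w i) + pc a0 (w j) + 1) / 2) := by
      simp only [hf', hx' a0]
    have e2 : f' a0 j = B * ((pc a0 (w i) + pc a0 (w j)) / 2) ^ 2
        + (j : ℕ) * ((pc a0 (w i) + pc a0 (w j)) / 2) := by
      simp only [hf', hy' a0]
    have hsw := hswap a0
    rw [e1, e2] at hsw
    simp only [hf] at hsw hk ⊢
    omega
  unfold phi
  exact Finset.sum_lt_sum (fun a _ => hle a)
    ⟨a0, Finset.mem_range.mpr (by omega), hlt⟩

end SP


/-- Lemma 1.2: The unique sorted `q`-tuple with the same product as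
`(u_1, …, u_q)` can be obtained from `(u_1, …, u_q)` by a finite number of single
sorting steps, i.e. the two tuples are related by the reflexive–transitive closure
of the single sorting step relation. -/
theorem sorted_tuple_reachable (q : ℕ) (u : Fin q → Multiset ℕ) :
    ∃ u' : Fin q → Multiset ℕ,
      IsSortedTuple u' ∧ (∑ i, u' i = ∑ i, u i) ∧
      (∀ v : Fin q → Multiset ℕ, IsSortedTuple v → (∑ i, v i = ∑ i, u i) → v = u') ∧
      Relation.ReflTransGen SortStep u u' := by
  classical
  set s := ∑ i, u i with hsdef
  have reach : ∀ n (w : Fin q → Multiset ℕ), ∑ k, w k = s →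
      SP.phi q s.sum (q * Multiset.card s + 1) w ≤ n →
      ∃ z, IsSortedTuple z ∧ (∑ k, z k = s) ∧ Relation.ReflTransGen SortStep w z := by
    intro n
    induction n with
    | zero =>
      intro w hw hφ
      by_cases hsort : IsSortedTuple w
      · exact ⟨w, hsort, hw, Relation.ReflTransGen.refl⟩
      · obtain ⟨w', hstep, hsum⟩ := SP.exists_step w hsort
        have := SP.step_decrease s w w' hw hstep
        omega
    | succ n ih =>
      intro w hw hφ
      by_cases hsort : IsSortedTuple w
      · exact ⟨w, hsort, hw, Relation.ReflTransGen.refl⟩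
      · obtain ⟨w', hstep, hsum⟩ := SP.exists_step w hsort
        have hdec := SP.step_decrease s w w' hw hstep
        obtain ⟨z, h1, h2, h3⟩ := ih w' (hsum.trans hw) (by omega)
        exact ⟨z, h1, h2, Relation.ReflTransGen.head hstep h3⟩
  obtain ⟨u', h1, h2, h3⟩ := reach _ u rfl le_rfl
  refine ⟨u', h1, h2, ?_, h3⟩
  intro v hv hvs
  funext k
  apply SP.pc_ext
  intro a
  have hbv : ∀ i j : Fin q, i < j →
      SP.pc a (v j) ≤ SP.pc a (v i) ∧ SP.pc a (v i) ≤ SP.pc a (v j) + 1 :=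
    fun i j hij => (SP.isSortedPair_iff _ _).mp (hv i j hij) a
  have hbu : ∀ i j : Fin q, i < j →
      SP.pc a (u' j) ≤ SP.pc a (u' i) ∧ SP.pc a (u' i) ≤ SP.pc a (u' j) + 1 :=
    fun i j hij => (SP.isSortedPair_iff _ _).mp (h1 i j hij) a
  have hsum : ∑ i, SP.pc a (v i) = ∑ i, SP.pc a (u' i) := by
    rw [← SP.pc_sum, ← SP.pc_sum, hvs, h2]
  exact SP.bal_eq _ _ hbv hbu hsum k
end

section
/- Let u = (u_1,…,u_q) be a q-tuple of monomials in S = K[x_1,…,x_n] with d_i = deg(u_i), let t be an index with d_t = max{d_i : 1 ≤ i ≤ q} and s an index with d_s = min{d_i : 1 ≤ i ≤ q}, and assume d_t − d_s > 1. Let u~ be the q-tuple obtained from u by replacing the pair (u_t, u_s) by sort(u_t, u_s). Then f(u~) < f(u), where f is the function on q-tuples of monomials defined by f(w_1,…,w_q) = Σ_{i<j} |deg(w_i) − deg(w_j)|. -/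
/-- The function `f` on `q`-tuples of monomials: `f(w_1,…,w_q) = Σ_{i<j} |deg w_i − deg w_j|`. -/
def fdeg {α : Type*} {q : ℕ} (w : Fin q → Multiset α) : ℤ :=
  ∑ p ∈ Finset.univ.filter (fun p : Fin q × Fin q => p.1 < p.2),
    |(Multiset.card (w p.1) : ℤ) - (Multiset.card (w p.2) : ℤ)|


lemma altSplit_length {α : Type*} (l : List α) :
    (altSplit l).1.length = (l.length + 1) / 2 ∧ (altSplit l).2.length = l.length / 2 := by
  induction l with
  | nil => simp [altSplit]
  | cons a l ih =>
    simp only [altSplit, List.length_cons]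
    constructor
    · simp [ih.2]; omega
    · rw [ih.1]

lemma sortPair_card (u v : Multiset ℕ) :
    Multiset.card (sortPair u v).1 = (Multiset.card u + Multiset.card v + 1) / 2 ∧
    Multiset.card (sortPair u v).2 = (Multiset.card u + Multiset.card v) / 2 := by
  have h := altSplit_length ((u + v).sort (· ≤ ·))
  have hl : ((u + v).sort (· ≤ ·)).length = Multiset.card u + Multiset.card v := by
    rw [Multiset.length_sort, Multiset.card_add]
  simp only [sortPair, Multiset.coe_card]
  rw [h.1, h.2, hl]
  omega



/-- abbreviation for the absolute degree difference -/
private def H {q : ℕ} (w : Fin q → Multiset ℕ) (i j : Fin q) : ℤ :=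
  |(Multiset.card (w i) : ℤ) - (Multiset.card (w j) : ℤ)|

private lemma H_comm {q : ℕ} (w : Fin q → Multiset ℕ) (i j : Fin q) : H w i j = H w j i :=
  abs_sub_comm _ _

private lemma two_fdeg {q : ℕ} (w : Fin q → Multiset ℕ) :
    2 * fdeg w = ∑ i : Fin q, ∑ j : Fin q, H w i j := by
  have hswap : ∑ p ∈ Finset.univ.filter (fun p : Fin q × Fin q => p.2 < p.1), H w p.1 p.2
      = ∑ p ∈ Finset.univ.filter (fun p : Fin q × Fin q => p.1 < p.2), H w p.1 p.2 := by
    apply Finset.sum_nbij' (fun p => Prod.swap p) (fun p => Prod.swap p) <;>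
      simp [H_comm]
  have hsplit := Finset.sum_filter_add_sum_filter_not Finset.univ
    (fun p : Fin q × Fin q => p.1 < p.2) (fun p => H w p.1 p.2)
  have hsplit2 := Finset.sum_filter_add_sum_filter_not
    (Finset.univ.filter (fun p : Fin q × Fin q => ¬ p.1 < p.2))
    (fun p : Fin q × Fin q => p.2 < p.1) (fun p => H w p.1 p.2)
  have hfe : (Finset.univ.filter (fun p : Fin q × Fin q => ¬ p.1 < p.2)).filter
      (fun p : Fin q × Fin q => p.2 < p.1)
      = Finset.univ.filter (fun p : Fin q × Fin q => p.2 < p.1) := by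
    rw [Finset.filter_filter]
    apply Finset.filter_congr
    intro p _
    constructor
    · rintro ⟨-, h⟩; exact h
    · intro h; exact ⟨not_lt_of_gt h, h⟩
  have hdiag : ∑ p ∈ (Finset.univ.filter (fun p : Fin q × Fin q => ¬ p.1 < p.2)).filter
      (fun p : Fin q × Fin q => ¬ p.2 < p.1), H w p.1 p.2 = 0 := by
    apply Finset.sum_eq_zero
    intro p hp
    simp only [Finset.filter_filter, Finset.mem_filter] at hp
    have : p.1 = p.2 := le_antisymm (le_of_not_gt hp.2.2) (le_of_not_gt hp.2.1)
    simp [H, this]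
  have htot : ∑ p : Fin q × Fin q, H w p.1 p.2 = ∑ i : Fin q, ∑ j : Fin q, H w i j := by
    rw [← Finset.univ_product_univ, Finset.sum_product]
  rw [← htot, ← hsplit, ← hsplit2, hfe, hdiag, hswap]
  simp only [fdeg, H]
  ring

private lemma fdeg_decomp {q : ℕ} (w : Fin q → Multiset ℕ) (t s : Fin q) (hts : t ≠ s) :
    2 * fdeg w = 2 * H w t s
      + 2 * ∑ k ∈ (Finset.univ.erase t).erase s, (H w t k + H w s k)
      + ∑ i ∈ (Finset.univ.erase t).erase s, ∑ j ∈ (Finset.univ.erase t).erase s, H w i j := by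
  classical
  set B := (Finset.univ.erase t).erase s with hB
  have hsB : s ∉ B := Finset.notMem_erase _ _
  have htB : t ∉ B := fun h => Finset.notMem_erase t _ (Finset.mem_of_mem_erase h)
  have htsB : t ∉ insert s B := by
    simp only [Finset.mem_insert]
    rintro (h | h)
    · exact hts h
    · exact htB h
  have huniv : (Finset.univ : Finset (Fin q)) = insert t (insert s B) := by
    rw [hB, Finset.insert_erase (by simp [Ne.symm hts]), Finset.insert_erase (by simp)]
  have hHtt : H w t t = 0 := by simp [H]
  have hHss : H w s s = 0 := by simp [H]
  have hHst : H w s t = H w t s := H_comm w s t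
  have hiB : ∀ x : Fin q, ∑ i ∈ B, (H w i x) = ∑ i ∈ B, H w x i := by
    intro x
    exact Finset.sum_congr rfl fun i _ => H_comm w i x
  rw [two_fdeg, huniv, Finset.sum_insert htsB, Finset.sum_insert hsB]
  have hx : ∀ x : Fin q, ∑ j ∈ insert t (insert s B), H w x j
      = H w x t + H w x s + ∑ j ∈ B, H w x j := by
    intro x
    rw [Finset.sum_insert htsB, Finset.sum_insert hsB]
    ring
  rw [hx t, hx s, Finset.sum_congr rfl (fun x _ => hx x),
    Finset.sum_add_distrib, Finset.sum_add_distrib, hiB t, hiB s,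
    hHtt, hHss, hHst, Finset.sum_add_distrib]
  ring

/-- if `u_t` has maximal degree, `u_s` has minimal degree, `deg u_t − deg u_s > 1`,
and `ũ` is obtained from `u` by replacing the pair `(u_t, u_s)` with `sort(u_t, u_s)`,
then `f(ũ) < f(u)`. -/
theorem fdeg_lt_of_sort_extremes (q : ℕ) (u : Fin q → Multiset ℕ) (t s : Fin q)
    (hmax : ∀ i : Fin q, Multiset.card (u i) ≤ Multiset.card (u t))
    (hmin : ∀ i : Fin q, Multiset.card (u s) ≤ Multiset.card (u i))
    (hgap : Multiset.card (u s) + 1 < Multiset.card (u t))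
    (v : Fin q → Multiset ℕ)
    (hvt : v t = (sortPair (u t) (u s)).1)
    (hvs : v s = (sortPair (u t) (u s)).2)
    (hother : ∀ k : Fin q, k ≠ t → k ≠ s → v k = u k) :
    fdeg v < fdeg u := by

  have ha : Multiset.card (u t) + Multiset.card (u s) ≤ 2 * Multiset.card (v t) ∧
      2 * Multiset.card (v t) ≤ Multiset.card (u t) + Multiset.card (u s) + 1 := by
    rw [hvt, (sortPair_card _ _).1]; omega
  have hb : 2 * Multiset.card (v s) ≤ Multiset.card (u t) + Multiset.card (u s) ∧
      Multiset.card (u t) + Multiset.card (u s) ≤ 2 * Multiset.card (v s) + 1 := by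
    rw [hvs, (sortPair_card _ _).2]; omega
  have hts : t ≠ s := by intro h; rw [h] at hgap; omega
  have hdv := fdeg_decomp v t s hts
  have hdu := fdeg_decomp u t s hts
  set B := (Finset.univ.erase t).erase s with hBdef
  have hmem : ∀ k, k ∈ B → k ≠ t ∧ k ≠ s := by
    intro k hk
    simp only [hBdef, Finset.mem_erase] at hk
    exact ⟨hk.2.1, hk.1⟩
  -- the double sum over B is unchanged
  have hDD : ∑ i ∈ B, ∑ j ∈ B, H v i j = ∑ i ∈ B, ∑ j ∈ B, H u i j := by
    refine Finset.sum_congr rfl fun i hi => Finset.sum_congr rfl fun j hj => ?_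
    rw [H, H, hother i (hmem i hi).1 (hmem i hi).2, hother j (hmem j hj).1 (hmem j hj).2]
  -- the mixed sums do not increase
  have hMix : ∑ k ∈ B, (H v t k + H v s k) ≤ ∑ k ∈ B, (H u t k + H u s k) := by
    refine Finset.sum_le_sum fun k hk => ?_
    rw [H, H, H, H, hother k (hmem k hk).1 (hmem k hk).2]
    have m := hmax k; have n := hmin k
    rcases abs_cases ((Multiset.card (v t) : ℤ) - (Multiset.card (u k) : ℤ)) with
        ⟨e1, _⟩ | ⟨e1, _⟩ <;>
      rcases abs_cases ((Multiset.card (v s) : ℤ) - (Multiset.card (u k) : ℤ)) with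
        ⟨e2, _⟩ | ⟨e2, _⟩ <;>
      rcases abs_cases ((Multiset.card (u t) : ℤ) - (Multiset.card (u k) : ℤ)) with
        ⟨e3, _⟩ | ⟨e3, _⟩ <;>
      rcases abs_cases ((Multiset.card (u s) : ℤ) - (Multiset.card (u k) : ℤ)) with
        ⟨e4, _⟩ | ⟨e4, _⟩ <;>
      rw [e1, e2, e3, e4] <;> omega
  -- the (t,s) term strictly decreases
  have hTS : H v t s < H u t s := by
    rw [H, H]
    rcases abs_cases ((Multiset.card (v t) : ℤ) - (Multiset.card (v s) : ℤ)) with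
        ⟨e1, _⟩ | ⟨e1, _⟩ <;>
      rcases abs_cases ((Multiset.card (u t) : ℤ) - (Multiset.card (u s) : ℤ)) with
        ⟨e2, _⟩ | ⟨e2, _⟩ <;>
      rw [e1, e2] <;> omega
  omega
end

section
/- Let B be a finite sortable set of monomials in S = K[x_1,…,x_n] and let T = K[y_u : u ∈ B] be a polynomial ring with one variable y_u for each u ∈ B. Then there exists a monomial order < on T such that for every unsorted pair (u,v) ∈ B × B with sort(u,v) = (u',v'), the initial (leading) monomial of the binomial f_{u,v} = y_u y_v − y_{u'} y_{v'} with respect to < is y_u y_v. -/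
/-- A set `B` of monomials is sortable if `sort(u,v) ∈ B × B` for all `(u,v) ∈ B × B`. -/
def IsSortable {α : Type*} [LinearOrder α] (B : Finset (Multiset α)) : Prop :=
  ∀ u ∈ B, ∀ v ∈ B, (sortPair u v).1 ∈ B ∧ (sortPair u v).2 ∈ B

namespace SortingOrder

variable {n : ℕ}

/-- prefix count: number of elements with value `< t`. -/
def pc (w : Multiset (Fin n)) (t : ℕ) : ℕ := w.countP (fun i => i.val < t)

lemma pc_add (u v : Multiset (Fin n)) (t : ℕ) : pc (u + v) t = pc u t + pc v t :=
  Multiset.countP_add _ _ _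

lemma pc_zero (w : Multiset (Fin n)) : pc w 0 = 0 :=
  Multiset.countP_eq_zero.mpr (by simp)

lemma pc_large (w : Multiset (Fin n)) {t : ℕ} (ht : n ≤ t) : pc w t = Multiset.card w :=
  Multiset.countP_eq_card.mpr (fun a _ => lt_of_lt_of_le a.isLt ht)

lemma pc_count (w : Multiset (Fin n)) (x : Fin n) :
    pc w (x.val + 1) = pc w x.val + w.count x := by
  induction w using Multiset.induction_on with
  | empty => simp [pc]
  | cons a w ih =>
    simp only [pc, Multiset.countP_cons, Multiset.count_cons] at *
    rcases eq_or_ne a x with rfl | hax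
    · simp only [if_pos rfl]
      split_ifs <;> omega
    · have hv : a.val ≠ x.val := fun h => hax (Fin.ext h)
      simp only [if_neg (Ne.symm hax)]
      split_ifs <;> omega

lemma pc_ext {u v : Multiset (Fin n)} (h : ∀ t, pc u t = pc v t) : u = v := by
  ext x
  have h1 := pc_count u x
  have h2 := pc_count v x
  rw [h, h] at h1
  omega

/-- interval count -/
def icnt (w : Multiset (Fin n)) (s t : ℕ) : ℕ := w.countP (fun i => s ≤ i.val ∧ i.val < t)

lemma icnt_pc (w : Multiset (Fin n)) {s t : ℕ} (hst : s ≤ t) :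
    pc w s + icnt w s t = pc w t := by
  induction w using Multiset.induction_on with
  | empty => simp [pc, icnt]
  | cons a w ih =>
    simp only [pc, icnt, Multiset.countP_cons] at *
    split_ifs <;> omega

lemma pc_mono (w : Multiset (Fin n)) {s t : ℕ} (hst : s ≤ t) : pc w s ≤ pc w t := by
  have := icnt_pc w hst; omega

lemma icnt_add (u v : Multiset (Fin n)) (s t : ℕ) :
    icnt (u + v) s t = icnt u s t + icnt v s t :=
  Multiset.countP_add _ _ _

end SortingOrder
section Part2
namespace SortingOrder
variable {n : ℕ}

lemma altSplit_coe {α : Type*} (l : List α) :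
    ((altSplit l).1 : Multiset α) + ((altSplit l).2 : Multiset α) = (l : Multiset α) := by
  induction l with
  | nil => rfl
  | cons a l ih =>
    show ((a :: (altSplit l).2 : List α) : Multiset α) + ((altSplit l).1 : Multiset α) = _
    rw [← Multiset.cons_coe, Multiset.cons_add, add_comm, ih]
    rfl

lemma mem_altSplit₁ {α : Type*} {l : List α} {x : α} (h : x ∈ (altSplit l).1) : x ∈ l := by
  have := altSplit_coe l
  have hx : x ∈ ((altSplit l).1 : Multiset α) + ((altSplit l).2 : Multiset α) :=
    Multiset.mem_add.mpr (Or.inl (Multiset.mem_coe.mpr h))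
  rw [this] at hx
  exact Multiset.mem_coe.mp hx

lemma mem_altSplit₂ {α : Type*} {l : List α} {x : α} (h : x ∈ (altSplit l).2) : x ∈ l := by
  have := altSplit_coe l
  have hx : x ∈ ((altSplit l).1 : Multiset α) + ((altSplit l).2 : Multiset α) :=
    Multiset.mem_add.mpr (Or.inr (Multiset.mem_coe.mpr h))
  rw [this] at hx
  exact Multiset.mem_coe.mp hx

lemma altSplit_balance (l : List (Fin n)) (hl : List.Pairwise (· ≤ ·) l) (s t : ℕ) :
    (icnt ((altSplit l).1 : Multiset (Fin n)) s t ≤ icnt ((altSplit l).2 : Multiset (Fin n)) s t + 1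
      ∧ icnt ((altSplit l).2 : Multiset (Fin n)) s t ≤ icnt ((altSplit l).1 : Multiset (Fin n)) s t + 1)
    ∧ ((∀ x ∈ l, s ≤ x.val) →
        icnt ((altSplit l).2 : Multiset (Fin n)) s t ≤ icnt ((altSplit l).1 : Multiset (Fin n)) s t) := by
  induction l with
  | nil => simp [altSplit, icnt]
  | cons a l ih =>
    rw [List.pairwise_cons] at hl
    obtain ⟨ha, hl'⟩ := hl
    obtain ⟨⟨ih1, ih2⟩, ih3⟩ := ih hl'
    have e1 : ((altSplit (a :: l)).1 : Multiset (Fin n)) = a ::ₘ ((altSplit l).2 : Multiset (Fin n)) := by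
      show ((a :: (altSplit l).2 : List (Fin n)) : Multiset (Fin n)) = _
      rw [← Multiset.cons_coe]
    have e2 : ((altSplit (a :: l)).2 : Multiset (Fin n)) = ((altSplit l).1 : Multiset (Fin n)) := rfl
    rw [e1, e2]
    have hc : icnt (a ::ₘ ((altSplit l).2 : Multiset (Fin n))) s t
        = icnt ((altSplit l).2 : Multiset (Fin n)) s t + (if s ≤ a.val ∧ a.val < t then 1 else 0) :=
      Multiset.countP_cons _ _ _
    by_cases h1 : s ≤ a.val
    · have hall : ∀ x ∈ l, s ≤ x.val := fun x hx => le_trans h1 (ha x hx)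
      have h3 := ih3 hall
      by_cases h2 : a.val < t
      · rw [hc, if_pos ⟨h1, h2⟩]
        refine ⟨⟨by omega, by omega⟩, fun _ => by omega⟩
      · -- t ≤ a.val : all counts vanish
        have z1 : icnt ((altSplit l).1 : Multiset (Fin n)) s t = 0 :=
          Multiset.countP_eq_zero.mpr (fun x hx hp => by
            have := ha x (mem_altSplit₁ (Multiset.mem_coe.mp hx))
            have : a.val ≤ x.val := this
            omega)
        have z2 : icnt ((altSplit l).2 : Multiset (Fin n)) s t = 0 :=
          Multiset.countP_eq_zero.mpr (fun x hx hp => by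
            have := ha x (mem_altSplit₂ (Multiset.mem_coe.mp hx))
            have : a.val ≤ x.val := this
            omega)
        rw [hc, if_neg (by omega)]
        refine ⟨⟨by omega, by omega⟩, fun _ => by omega⟩
    · rw [hc, if_neg (by omega)]
      refine ⟨⟨by omega, by omega⟩, fun hall => absurd (hall a List.mem_cons_self) h1⟩

end SortingOrder
end Part2
section Part3
namespace SortingOrder
variable {n : ℕ}

lemma sortPair_add (u v : Multiset (Fin n)) :
    (sortPair u v).1 + (sortPair u v).2 = u + v := by
  show ((altSplit ((u + v).sort (· ≤ ·))).1 : Multiset (Fin n))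
      + ((altSplit ((u + v).sort (· ≤ ·))).2 : Multiset (Fin n)) = u + v
  rw [altSplit_coe, Multiset.sort_eq]

lemma sortPair_balance (u v : Multiset (Fin n)) (s t : ℕ) :
    (icnt (sortPair u v).1 s t ≤ icnt (sortPair u v).2 s t + 1
      ∧ icnt (sortPair u v).2 s t ≤ icnt (sortPair u v).1 s t + 1)
    ∧ icnt (sortPair u v).2 0 t ≤ icnt (sortPair u v).1 0 t := by
  have hs := Multiset.pairwise_sort (α := Fin n) (u + v) (· ≤ ·)
  have h1 := altSplit_balance ((u + v).sort (· ≤ ·)) hs s t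
  have h2 := altSplit_balance ((u + v).sort (· ≤ ·)) hs 0 t
  exact ⟨h1.1, h2.2 (fun x _ => Nat.zero_le _)⟩

lemma icnt_zero_eq_pc (w : Multiset (Fin n)) (t : ℕ) : icnt w 0 t = pc w t := by
  have := icnt_pc w (Nat.zero_le t)
  have := pc_zero w
  omega

/-- The balanced-everywhere pairs are precisely the sorted ones (up to swap). -/
lemma balanced_eq (u v : Multiset (Fin n))
    (H : ∀ s t : ℕ, s ≤ t → icnt u s t ≤ icnt v s t + 1 ∧ icnt v s t ≤ icnt u s t + 1) :
    sortPair u v = (u, v) ∨ sortPair u v = (v, u) := by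
  set p1 := (sortPair u v).1 with hp1
  set p2 := (sortPair u v).2 with hp2
  -- conservation of prefix counts
  have hcons : ∀ t, pc p1 t + pc p2 t = pc u t + pc v t := by
    intro t
    rw [← pc_add, ← pc_add, sortPair_add]
  -- balance of the sorted pair prefixes
  have hbalp : ∀ t, pc p2 t ≤ pc p1 t ∧ pc p1 t ≤ pc p2 t + 1 := by
    intro t
    have h := sortPair_balance u v 0 t
    rw [icnt_zero_eq_pc, icnt_zero_eq_pc] at h
    exact ⟨h.2, by
      have h2 := (sortPair_balance u v 0 t).1.1
      rw [icnt_zero_eq_pc, icnt_zero_eq_pc] at h2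
      exact h2⟩
  -- balance of (u,v) prefixes
  have hbal : ∀ t, pc u t ≤ pc v t + 1 ∧ pc v t ≤ pc u t + 1 := by
    intro t
    have h := H 0 t (Nat.zero_le t)
    rw [icnt_zero_eq_pc, icnt_zero_eq_pc] at h
    exact h
  by_cases hdom : ∀ t, pc v t ≤ pc u t
  · left
    have hu : ∀ t, pc u t = pc p1 t := by
      intro t
      have := hcons t; have := hbalp t; have := hbal t; have := hdom t
      omega
    have hv : ∀ t, pc v t = pc p2 t := by
      intro t
      have := hcons t; have := hbalp t; have := hbal t; have := hdom t
      omega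
    have : p1 = u := (pc_ext (fun t => (hu t).symm))
    have : p2 = v := (pc_ext (fun t => (hv t).symm))
    rw [Prod.ext_iff]
    exact ⟨by rw [← hp1]; exact pc_ext (fun t => (hu t).symm), pc_ext (fun t => (hv t).symm)⟩
  · right
    push_neg at hdom
    obtain ⟨t₀, ht₀⟩ := hdom
    have hdom' : ∀ t, pc u t ≤ pc v t := by
      intro t
      by_contra hcon
      push_neg at hcon
      rcases le_total t t₀ with hle | hle
      · have h := H t t₀ hle
        have e1 := icnt_pc u hle
        have e2 := icnt_pc v hle
        omega
      · have h := H t₀ t hle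
        have e1 := icnt_pc u hle
        have e2 := icnt_pc v hle
        omega
    have hu : ∀ t, pc v t = pc p1 t := by
      intro t
      have := hcons t; have := hbalp t; have := hbal t; have := hdom' t
      omega
    have hv : ∀ t, pc u t = pc p2 t := by
      intro t
      have := hcons t; have := hbalp t; have := hbal t; have := hdom' t
      omega
    rw [Prod.ext_iff]
    exact ⟨pc_ext (fun t => (hu t).symm), pc_ext (fun t => (hv t).symm)⟩

end SortingOrder
end Part3
section Part4
namespace SortingOrder
variable {n : ℕ}

lemma sq_bal_int {x y x' y' : ℤ} (hsum : x + y = x' + y') (h1 : x' ≤ y' + 1)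
    (h2 : y' ≤ x' + 1) : x' ^ 2 + y' ^ 2 ≤ x ^ 2 + y ^ 2 := by
  rcases eq_or_ne x y with rfl | hne
  · have hxy : x' = y' := by omega
    subst hxy
    have hx : x = x' := by omega
    rw [hx]
  · have h3 : 1 ≤ (x - y) ^ 2 := by
      rcases lt_or_gt_of_ne hne with h | h
      · nlinarith
      · nlinarith
    have h4 : (x' - y') ^ 2 ≤ 1 := by nlinarith
    have h5 : (x + y) ^ 2 = (x' + y') ^ 2 := by rw [hsum]
    nlinarith [h3, h4, h5]

lemma sq_bal_int_lt {x y x' y' : ℤ} (hsum : x + y = x' + y') (h1 : x' ≤ y' + 1)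
    (h2 : y' ≤ x' + 1) (hunb : y + 2 ≤ x ∨ x + 2 ≤ y) : x' ^ 2 + y' ^ 2 < x ^ 2 + y ^ 2 := by
  have h3 : 4 ≤ (x - y) ^ 2 := by
    rcases hunb with h | h
    · nlinarith
    · nlinarith
  have h4 : (x' - y') ^ 2 ≤ 1 := by nlinarith
  have h5 : (x + y) ^ 2 = (x' + y') ^ 2 := by rw [hsum]
  nlinarith [h3, h4, h5]

lemma sq_bal_nat {x y x' y' : ℕ} (hsum : x + y = x' + y') (h1 : x' ≤ y' + 1)
    (h2 : y' ≤ x' + 1) : x' ^ 2 + y' ^ 2 ≤ x ^ 2 + y ^ 2 := by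
  have := sq_bal_int (x := x) (y := y) (x' := x') (y' := y')
    (by exact_mod_cast hsum) (by exact_mod_cast h1) (by exact_mod_cast h2)
  exact_mod_cast this

lemma sq_bal_nat_lt {x y x' y' : ℕ} (hsum : x + y = x' + y') (h1 : x' ≤ y' + 1)
    (h2 : y' ≤ x' + 1) (hunb : y + 2 ≤ x ∨ x + 2 ≤ y) : x' ^ 2 + y' ^ 2 < x ^ 2 + y ^ 2 := by
  have := sq_bal_int_lt (x := x) (y := y) (x' := x') (y' := y')
    (by exact_mod_cast hsum) (by exact_mod_cast h1) (by exact_mod_cast h2)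
    (by rcases hunb with h | h
        · exact Or.inl (by exact_mod_cast h)
        · exact Or.inr (by exact_mod_cast h))
  exact_mod_cast this

/-- the weight of a monomial -/
def wt (w : Multiset (Fin n)) : ℕ :=
  ∑ p ∈ Finset.range (n + 1) ×ˢ Finset.range (n + 1), (pc w p.2 - pc w p.1) ^ 2

lemma wt_term_eq_icnt (w : Multiset (Fin n)) {s t : ℕ} (hst : s ≤ t) :
    pc w t - pc w s = icnt w s t := by
  have := icnt_pc w hst
  omega

lemma pc_clamp (w : Multiset (Fin n)) (t : ℕ) : pc w (min t n) = pc w t := by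
  rcases le_total t n with h | h
  · rw [min_eq_left h]
  · rw [min_eq_right h, pc_large w h, pc_large w le_rfl]

lemma wt_lt (u v : Multiset (Fin n)) (hne1 : sortPair u v ≠ (u, v))
    (hne2 : sortPair u v ≠ (v, u)) :
    wt (sortPair u v).1 + wt (sortPair u v).2 < wt u + wt v := by
  -- get an unbalanced interval
  have hnotbal : ¬ ∀ s t : ℕ, s ≤ t → icnt u s t ≤ icnt v s t + 1 ∧ icnt v s t ≤ icnt u s t + 1 := by
    intro H
    rcases balanced_eq u v H with h | h
    · exact hne1 h
    · exact hne2 h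
  push_neg at hnotbal
  obtain ⟨s₀, t₀, hst₀, hunb⟩ := hnotbal
  -- clamp the unbalanced interval into range
  set s₁ := min s₀ n with hs₁
  set t₁ := min t₀ n with ht₁
  have hst₁ : s₁ ≤ t₁ := by omega
  have hiu : icnt u s₁ t₁ = icnt u s₀ t₀ := by
    have e1 := icnt_pc u hst₀
    have e2 := icnt_pc u hst₁
    have c1 : pc u s₁ = pc u s₀ := by rw [hs₁]; exact pc_clamp u s₀
    have c2 : pc u t₁ = pc u t₀ := by rw [ht₁]; exact pc_clamp u t₀
    omega
  have hiv : icnt v s₁ t₁ = icnt v s₀ t₀ := by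
    have e1 := icnt_pc v hst₀
    have e2 := icnt_pc v hst₁
    have c1 : pc v s₁ = pc v s₀ := by rw [hs₁]; exact pc_clamp v s₀
    have c2 : pc v t₁ = pc v t₀ := by rw [ht₁]; exact pc_clamp v t₀
    omega
  set p1 := (sortPair u v).1 with hp1
  set p2 := (sortPair u v).2 with hp2
  have hcons : ∀ s t : ℕ, icnt p1 s t + icnt p2 s t = icnt u s t + icnt v s t := by
    intro s t
    rw [← icnt_add, ← icnt_add, sortPair_add]
  have key : ∀ p ∈ Finset.range (n + 1) ×ˢ Finset.range (n + 1),
      (pc p1 p.2 - pc p1 p.1) ^ 2 + (pc p2 p.2 - pc p2 p.1) ^ 2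
        ≤ (pc u p.2 - pc u p.1) ^ 2 + (pc v p.2 - pc v p.1) ^ 2 := by
    rintro ⟨s, t⟩ _
    rcases le_total s t with hst | hts
    · rw [wt_term_eq_icnt p1 hst, wt_term_eq_icnt p2 hst, wt_term_eq_icnt u hst,
        wt_term_eq_icnt v hst]
      have hb := (sortPair_balance u v s t).1
      exact sq_bal_nat (hcons s t).symm hb.1 hb.2
    · have z : ∀ w : Multiset (Fin n), pc w t - pc w s = 0 :=
        fun w => Nat.sub_eq_zero_of_le (pc_mono w hts)
      rw [z, z, z, z]
  have hmem : (s₁, t₁) ∈ Finset.range (n + 1) ×ˢ Finset.range (n + 1) := by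
    rw [Finset.mem_product, Finset.mem_range, Finset.mem_range]
    omega
  have hstrict : (pc p1 t₁ - pc p1 s₁) ^ 2 + (pc p2 t₁ - pc p2 s₁) ^ 2
      < (pc u t₁ - pc u s₁) ^ 2 + (pc v t₁ - pc v s₁) ^ 2 := by
    rw [wt_term_eq_icnt p1 hst₁, wt_term_eq_icnt p2 hst₁, wt_term_eq_icnt u hst₁,
      wt_term_eq_icnt v hst₁]
    have hb := (sortPair_balance u v s₁ t₁).1
    exact sq_bal_nat_lt (hcons s₁ t₁).symm hb.1 hb.2 (by omega)
  calc wt p1 + wt p2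
      = ∑ p ∈ Finset.range (n + 1) ×ˢ Finset.range (n + 1),
          ((pc p1 p.2 - pc p1 p.1) ^ 2 + (pc p2 p.2 - pc p2 p.1) ^ 2) := by
        rw [wt, wt, Finset.sum_add_distrib]
    _ < ∑ p ∈ Finset.range (n + 1) ×ˢ Finset.range (n + 1),
          ((pc u p.2 - pc u p.1) ^ 2 + (pc v p.2 - pc v p.1) ^ 2) :=
        Finset.sum_lt_sum key ⟨(s₁, t₁), hmem, hstrict⟩
    _ = wt u + wt v := by rw [wt, wt, Finset.sum_add_distrib]

end SortingOrder
end Part4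
section Part5
namespace SortingOrder

universe v

variable {σ : Type} (m₀ : MonomialOrder σ) (ω : (σ →₀ ℕ) →+ ℕ)

/-- Type synonym for `σ →₀ ℕ` carrying the weighted order. -/
def WSyn (_m₀ : MonomialOrder σ) (_ω : (σ →₀ ℕ) →+ ℕ) : Type v := ULift.{v} (σ →₀ ℕ)

noncomputable instance : AddCommMonoid (WSyn.{v} m₀ ω) :=
  inferInstanceAs (AddCommMonoid (ULift.{v} (σ →₀ ℕ)))

/-- projection to the underlying `Finsupp`. -/
def WSyn.fsp (a : WSyn.{v} m₀ ω) : σ →₀ ℕ := ULift.down (α := σ →₀ ℕ) a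

lemma WSyn.fsp_add (a b : WSyn.{v} m₀ ω) :
    WSyn.fsp m₀ ω (a + b) = WSyn.fsp m₀ ω a + WSyn.fsp m₀ ω b := rfl

lemma WSyn.fsp_injective : Function.Injective (WSyn.fsp.{v} m₀ ω) :=
  fun _ _ h => ULift.down_injective h

/-- the embedding into the lexicographic product -/
noncomputable def WSyn.emb (a : WSyn.{v} m₀ ω) : ℕ ×ₗ m₀.syn :=
  toLex (ω (WSyn.fsp m₀ ω a), m₀.toSyn (WSyn.fsp m₀ ω a))

lemma WSyn.emb_add (a b : WSyn.{v} m₀ ω) :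
    WSyn.emb m₀ ω (a + b) = WSyn.emb m₀ ω a + WSyn.emb m₀ ω b := by
  show toLex (ω (WSyn.fsp m₀ ω a + WSyn.fsp m₀ ω b),
      m₀.toSyn (WSyn.fsp m₀ ω a + WSyn.fsp m₀ ω b)) = _
  rw [map_add, map_add]
  rfl

lemma WSyn.emb_injective : Function.Injective (WSyn.emb.{v} m₀ ω) := by
  intro a b h
  have h2 : m₀.toSyn (WSyn.fsp m₀ ω a) = m₀.toSyn (WSyn.fsp m₀ ω b) :=
    congrArg (fun p => (ofLex p).2) h
  exact WSyn.fsp_injective m₀ ω (m₀.toSyn.injective h2)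

noncomputable instance : LinearOrder (WSyn.{v} m₀ ω) :=
  LinearOrder.lift' (WSyn.emb m₀ ω) (WSyn.emb_injective m₀ ω)

lemma WSyn.le_iff {a b : WSyn.{v} m₀ ω} : a ≤ b ↔ WSyn.emb m₀ ω a ≤ WSyn.emb m₀ ω b := Iff.rfl

lemma WSyn.lt_iff {a b : WSyn.{v} m₀ ω} : a < b ↔ WSyn.emb m₀ ω a < WSyn.emb m₀ ω b := Iff.rfl

noncomputable instance : IsOrderedCancelAddMonoid (WSyn.{v} m₀ ω) :=
  { add_le_add_left := fun a b h c => by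
      rw [WSyn.le_iff, WSyn.emb_add, WSyn.emb_add]
      exact add_le_add_left ((WSyn.le_iff m₀ ω).mp h) _
    le_of_add_le_add_left := fun a b c h => by
      rw [WSyn.le_iff] at h ⊢
      rw [WSyn.emb_add, WSyn.emb_add] at h
      exact le_of_add_le_add_left h }

instance : WellFoundedLT (WSyn.{v} m₀ ω) := by
  constructor
  have hwf : WellFounded ((· < ·) : (ℕ ×ₗ m₀.syn) → (ℕ ×ₗ m₀.syn) → Prop) :=
    (inferInstance : WellFoundedLT (ℕ ×ₗ m₀.syn)).wf
  exact Subrelation.wf (fun {a b} h => (WSyn.lt_iff m₀ ω).mp h) (InvImage.wf (WSyn.emb m₀ ω) hwf)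

/-- a weighted monomial order: compare weights first, break ties with `m₀`. -/
noncomputable def weightedOrder : MonomialOrder σ where
  syn := WSyn.{v} m₀ ω
  toSyn :=
    { toFun := fun a => ULift.up a
      invFun := fun a => WSyn.fsp m₀ ω a
      left_inv := fun _ => rfl
      right_inv := fun _ => rfl
      map_add' := fun _ _ => rfl }
  toSyn_monotone := by
    intro a b h
    obtain ⟨c, rfl⟩ := le_iff_exists_add.mp h
    show WSyn.emb m₀ ω (ULift.up a) ≤ WSyn.emb m₀ ω (ULift.up (a + c))
    have e : (ULift.up (a + c) : WSyn.{v} m₀ ω) = ULift.up a + ULift.up c := rfl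
    rw [e]; erw [WSyn.emb_add m₀ ω]
    have hh : WSyn.emb m₀ ω (ULift.up a) + WSyn.emb m₀ ω (ULift.up c)
        = toLex (ω a + ω c, m₀.toSyn a + m₀.toSyn c) := rfl
    rw [hh]
    rcases Nat.eq_zero_or_pos (ω c) with hc | hc
    · refine Prod.Lex.le_iff.mpr (Or.inr ⟨?_, ?_⟩)
      · show ω a = ω a + ω c
        omega
      · show m₀.toSyn a ≤ m₀.toSyn a + m₀.toSyn c
        exact m₀.le_add_right _ _
    · refine Prod.Lex.le_iff.mpr (Or.inl ?_)
      show ω a < ω a + ω c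
      omega

lemma weightedOrder_le_iff {a b : σ →₀ ℕ} :
    (weightedOrder.{v} m₀ ω).toSyn a ≤ (weightedOrder.{v} m₀ ω).toSyn b ↔
      toLex (ω a, m₀.toSyn a) ≤ toLex (ω b, m₀.toSyn b) := Iff.rfl

end SortingOrder
end Part5

/-- for a finite sortable set `B` of monomials in `K[x_1,…,x_n]` there is a
monomial order on `T = K[y_u : u ∈ B]` (the "sorting order") such that for every unsorted pair
`(u,v) ∈ B × B` with `sort(u,v) = (u',v')`, the initial monomial of the binomial
`f_{u,v} = y_u y_v − y_{u'} y_{v'}` is `y_u y_v`, i.e. `y_{u'} y_{v'} ≼ y_u y_v`. -/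
theorem exists_sorting_order (n : ℕ) (B : Finset (Multiset (Fin n)))
    (hB : IsSortable B) :
    ∃ mo : MonomialOrder ↥B,
      ∀ u v u' v' : ↥B,
        ¬ IsSortedPair (u : Multiset (Fin n)) (v : Multiset (Fin n)) →
        sortPair (u : Multiset (Fin n)) (v : Multiset (Fin n)) =
          ((u' : Multiset (Fin n)), (v' : Multiset (Fin n))) →
        mo.toSyn (Finsupp.single u' 1 + Finsupp.single v' 1) ≤
          mo.toSyn (Finsupp.single u 1 + Finsupp.single v 1) := by
  classical
  letI lin : LinearOrder ↥B := LinearOrder.lift' (Fintype.equivFin ↥B) (Equiv.injective _)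
  haveI wfgt := @Finite.to_wellFoundedGT ↥B inferInstance lin.toPartialOrder.toPreorder
  have m₀ : MonomialOrder ↥B := @MonomialOrder.lex ↥B lin wfgt
  set ω : (↥B →₀ ℕ) →+ ℕ :=
    Finsupp.liftAddHom
      (fun b => AddMonoidHom.mulRight (SortingOrder.wt (b : Multiset (Fin n)))) with hω
  have hωpair : ∀ x y : ↥B,
      ω (Finsupp.single x 1 + Finsupp.single y 1)
        = SortingOrder.wt (x : Multiset (Fin n)) + SortingOrder.wt (y : Multiset (Fin n)) := by
    intro x y
    rw [map_add, hω, Finsupp.liftAddHom_apply_single, Finsupp.liftAddHom_apply_single]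
    simp [AddMonoidHom.mulRight_apply]
  refine ⟨SortingOrder.weightedOrder m₀ ω, ?_⟩
  intro u v u' v' hns heq
  by_cases hcase : (u' : Multiset (Fin n)) = (v : Multiset (Fin n))
      ∧ (v' : Multiset (Fin n)) = (u : Multiset (Fin n))
  · have h1 : u' = v := Subtype.ext hcase.1
    have h2 : v' = u := Subtype.ext hcase.2
    rw [h1, h2, add_comm]
  · have hne1 : sortPair (u : Multiset (Fin n)) (v : Multiset (Fin n))
        ≠ ((u : Multiset (Fin n)), (v : Multiset (Fin n))) := hns
    have hne2 : sortPair (u : Multiset (Fin n)) (v : Multiset (Fin n))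
        ≠ ((v : Multiset (Fin n)), (u : Multiset (Fin n))) := by
      intro h
      rw [heq] at h
      exact hcase ⟨congrArg Prod.fst h, congrArg Prod.snd h⟩
    have hwt := SortingOrder.wt_lt (u : Multiset (Fin n)) (v : Multiset (Fin n)) hne1 hne2
    rw [heq] at hwt
    refine (SortingOrder.weightedOrder_le_iff m₀ ω).mpr ?_
    refine Prod.Lex.le_iff.mpr (Or.inl ?_)
    show ω (Finsupp.single u' 1 + Finsupp.single v' 1)
        < ω (Finsupp.single u 1 + Finsupp.single v 1)
    rw [hωpair, hωpair]
    simpa using hwt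
end

section
/- Let B = {u_1,…,u_m} be a finite sortable set of monomials in S = K[x_1,…,x_n], where K is a field, and consider the K-algebra homomorphism φ : K[y_1,…,y_m] → S[t] defined by φ(y_i) = u_i t for 1 ≤ i ≤ m, whose image is the toric ring A = K[u_1 t,…,u_m t]. Then the kernel of φ is generated, as an ideal, by the quadratic binomials y_i y_j − y_k y_l for all pairs (u_i, u_j) that are unsorted with sort(u_i, u_j) = (u_k, u_l). -/
open MvPolynomial

namespace SortAux

@[simp] lemma altSplit_nil {α : Type*} : altSplit ([] : List α) = ([], []) := rfl
@[simp] lemma altSplit_cons {α : Type*} (a : α) (l : List α) :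
    altSplit (a :: l) = (a :: (altSplit l).2, (altSplit l).1) := rfl

lemma altSplit_add {α : Type*} (l : List α) :
    ((altSplit l).1 : Multiset α) + ((altSplit l).2 : Multiset α) = (l : Multiset α) := by
  induction l with
  | nil => simp
  | cons a l ih =>
    
    simp only [altSplit_cons]
    rw [show ((a :: l : List α) : Multiset α) = a ::ₘ (l : Multiset α) from rfl,
      show ((a :: (altSplit l).2 : List α) : Multiset α) = a ::ₘ ((altSplit l).2 : Multiset α) from rfl,
      ← ih]
    
    rw [Multiset.cons_add]
    congr 1
    exact add_comm _ _

lemma altSplit_countP {α : Type*} [LinearOrder α] (p : α → Prop) [DecidablePred p]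
    (hp : ∀ a b : α, a ≤ b → p b → p a) :
    ∀ l : List α, l.Pairwise (· ≤ ·) →
      (altSplit l).1.countP p = (l.countP p + 1) / 2 ∧
      (altSplit l).2.countP p = l.countP p / 2 := by
  intro l
  induction l with
  | nil => simp
  | cons a l ih =>
    intro hs
    rw [List.pairwise_cons] at hs
    obtain ⟨hal, hs⟩ := hs
    have ih := ih hs
    have hsum : (altSplit l).1.countP p + (altSplit l).2.countP p = l.countP p := by
      have := altSplit_add l
      have h2 : Multiset.countP p (((altSplit l).1 : Multiset α) + ((altSplit l).2 : Multiset α))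
          = Multiset.countP p (l : Multiset α) := by rw [this]
      simpa [Multiset.countP_add, Multiset.coe_countP] using h2
    by_cases hpa : p a
    · constructor
      · simp only [altSplit_cons, List.countP_cons, hpa]
        rw [ih.2]
        simp only [decide_eq_true_eq, if_true]
        omega
      · simp only [altSplit_cons, List.countP_cons, hpa]
        rw [ih.1]
        simp only [decide_eq_true_eq, if_true]
    · have hl0 : l.countP p = 0 := by
        rw [List.countP_eq_zero]
        intro b hb hpb
        exact hpa (hp a b (hal b hb) (by simpa using hpb))
      have h1 : (altSplit l).1.countP p = 0 := by omega
      have h2 : (altSplit l).2.countP p = 0 := by omega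
      simp only [altSplit_cons, List.countP_cons]
      simp [hpa, h1, h2, hl0]

lemma altSplit_length {α : Type*} :
    ∀ l : List α, (altSplit l).1.length = (l.length + 1) / 2 ∧
      (altSplit l).2.length = l.length / 2 := by
  intro l
  induction l with
  | nil => simp
  | cons a l ih => simp only [altSplit_cons, List.length_cons]; omega

end SortAux

namespace SortAux

variable {n : ℕ}

/-- Counting function: number of elements `≤ x`. -/
def Nf (x : Fin n) (v : Multiset (Fin n)) : ℕ := v.countP (· ≤ x)

lemma Nf_add (x : Fin n) (v w : Multiset (Fin n)) : Nf x (v + w) = Nf x v + Nf x w :=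
  Multiset.countP_add _ v w

lemma sortPair_add (u v : Multiset (Fin n)) :
    (sortPair u v).1 + (sortPair u v).2 = u + v := by
  rw [sortPair]
  rw [altSplit_add]
  exact Multiset.sort_eq _ _

lemma Nf_sortPair (x : Fin n) (u v : Multiset (Fin n)) :
    Nf x (sortPair u v).1 = (Nf x (u + v) + 1) / 2 ∧
    Nf x (sortPair u v).2 = Nf x (u + v) / 2 := by
  have hs := Multiset.pairwise_sort (α := Fin n) (u + v) (· ≤ ·)
  have hp : ∀ a b : Fin n, a ≤ b → b ≤ x → a ≤ x := fun a b hab hbx => le_trans hab hbx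
  have h := altSplit_countP (fun a => a ≤ x) hp _ hs
  have hN : Nf x (u + v) = ((u + v).sort (· ≤ ·)).countP (fun a => decide (a ≤ x)) := by
    rw [Nf, ← Multiset.sort_eq (u + v) (· ≤ ·), Multiset.coe_countP]
    simp [Multiset.sort_eq]
  constructor
  · rw [sortPair]
    show Multiset.countP _ _ = _
    rw [Multiset.coe_countP, hN]
    exact h.1
  · rw [sortPair]
    show Multiset.countP _ _ = _
    rw [Multiset.coe_countP, hN]
    exact h.2

lemma card_sortPair (u v : Multiset (Fin n)) :
    Multiset.card (sortPair u v).1 = (Multiset.card (u + v) + 1) / 2 ∧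
    Multiset.card (sortPair u v).2 = Multiset.card (u + v) / 2 := by
  have h := altSplit_length ((u + v).sort (· ≤ ·))
  have hc : ((u + v).sort (· ≤ ·)).length = Multiset.card (u + v) := by
    rw [← Multiset.sort_eq (u + v) (· ≤ ·)]; simp [Multiset.sort_eq]
  constructor
  · rw [sortPair]; show Multiset.card (_ : Multiset (Fin n)) = _
    rw [Multiset.coe_card, h.1, hc]
  · rw [sortPair]; show Multiset.card (_ : Multiset (Fin n)) = _
    rw [Multiset.coe_card, h.2, hc]

lemma countP_eq_sum (p : Fin n → Prop) [DecidablePred p] (v : Multiset (Fin n)) :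
    v.countP p = ∑ b : Fin n, if p b then v.count b else 0 := by
  induction v using Multiset.induction with
  | empty => simp
  | cons a s ih =>
    rw [Multiset.countP_cons, ih]
    have : ∀ b : Fin n, (if p b then (a ::ₘ s).count b else 0)
        = (if p b then s.count b else 0) + (if p b then (if b = a then 1 else 0) else 0) := by
      intro b
      by_cases hb : p b <;> simp [hb, Multiset.count_cons]
    rw [Finset.sum_congr rfl (fun b _ => this b), Finset.sum_add_distrib]
    congr 1
    have h2 : ∀ b : Fin n, (if p b then (if b = a then 1 else 0) else 0)
        = (if b = a then (if p a then 1 else 0) else 0) := by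
      intro b
      by_cases hb : b = a
      · subst hb; simp
      · simp [hb]
    rw [Finset.sum_congr rfl (fun b _ => h2 b), Finset.sum_ite_eq' Finset.univ a]
    simp

lemma Nf_ext {v w : Multiset (Fin n)} (h : ∀ x, Nf x v = Nf x w) : v = w := by
  rw [Multiset.ext]
  suffices H : ∀ k (a : Fin n), a.val = k → v.count a = w.count a by
    intro a; exact H a.val a rfl
  intro k
  induction k using Nat.strong_induction_on with
  | _ k ih =>
  intro a hk
  have key : ∀ z : Multiset (Fin n),
      Nf a z = z.count a + ∑ b : Fin n, (if b < a then z.count b else 0) := by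
    intro z
    rw [Nf, countP_eq_sum]
    have : ∀ b : Fin n, (if b ≤ a then z.count b else 0)
        = (if b = a then z.count b else 0) + (if b < a then z.count b else 0) := by
      intro b
      rcases lt_trichotomy b a with hb | hb | hb
      · simp [le_of_lt hb, hb, ne_of_lt hb, not_lt_of_gt hb]
      · simp [hb]
      · simp [not_le_of_gt hb, not_lt_of_gt hb, (ne_of_lt hb).symm]
    rw [Finset.sum_congr rfl (fun b _ => this b), Finset.sum_add_distrib,
      Finset.sum_ite_eq' Finset.univ a (fun b => z.count b)]
    simp
  have hsum : ∑ b : Fin n, (if b < a then v.count b else 0)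
      = ∑ b : Fin n, (if b < a then w.count b else 0) := by
    refine Finset.sum_congr rfl fun b _ => ?_
    by_cases hb : b < a
    · simp only [hb, if_true]
      exact ih b.val (by rw [← hk]; exact hb) b rfl
    · simp [hb]
  have h1 := key v
  have h2 := key w
  rw [h a] at h1
  omega

/-- Pairwise sorted (in some order) multiset of monomials. -/
def PS (M : Multiset (Multiset (Fin n))) : Prop :=
  ∀ v ∈ M, ∀ w ∈ M.erase v, IsSortedPair v w ∨ IsSortedPair w v

lemma sorted_Nf {v w : Multiset (Fin n)} (h : IsSortedPair v w) (x : Fin n) :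
    Nf x v = (Nf x v + Nf x w + 1) / 2 ∧ Nf x w = (Nf x v + Nf x w) / 2 := by
  have h1 := (Nf_sortPair x v w).1
  have h2 := (Nf_sortPair x v w).2
  rw [IsSortedPair] at h
  rw [h] at h1 h2
  rw [Nf_add] at h1 h2
  exact ⟨h1, h2⟩

lemma sorted_Nf_le {v w : Multiset (Fin n)} (h : IsSortedPair v w ∨ IsSortedPair w v)
    (x : Fin n) : Nf x w ≤ Nf x v + 1 ∧ Nf x v ≤ Nf x w + 1 := by
  rcases h with h | h
  · have := sorted_Nf h x; omega
  · have := sorted_Nf h x; omega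

lemma PS_mono {M S : Multiset (Multiset (Fin n))} (hle : S ≤ M) (h : PS M) : PS S := by
  intro v hv w hw
  exact h v (Multiset.mem_of_le hle hv) w
    (Multiset.mem_of_le (Multiset.erase_le_erase v hle) hw)

lemma Nf_sum (x : Fin n) (M : Multiset (Multiset (Fin n))) :
    Nf x M.sum = (M.map (Nf x)).sum := by
  induction M using Multiset.induction with
  | empty => simp [Nf]
  | cons a s ih => simp [Multiset.sum_cons, Nf_add, ih]

lemma exists_max {M : Multiset (Multiset (Fin n))} (hM : PS M) (hne : M ≠ 0) :
    ∃ v ∈ M, ∀ w ∈ M.erase v, ∀ x, Nf x w ≤ Nf x v := by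
  induction M using Multiset.induction with
  | empty => exact absurd rfl hne
  | cons a R ih =>
    by_cases hR : R = 0
    · subst hR
      exact ⟨a, Multiset.mem_cons_self a 0, by simp⟩
    · have hRle : R ≤ a ::ₘ R := le_of_le_of_eq (Multiset.le_cons_self R a) rfl
      obtain ⟨vR, hvR, hmax⟩ := ih (PS_mono hRle hM) hR
      have hpair : IsSortedPair a vR ∨ IsSortedPair vR a := by
        apply hM a (Multiset.mem_cons_self a R) vR
        rwa [Multiset.erase_cons_head]
      have hRdecomp : R = vR ::ₘ R.erase vR := (Multiset.cons_erase hvR).symm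
      -- comparability
      rcases hpair with hs | hs
      · -- a dominates vR
        refine ⟨a, Multiset.mem_cons_self a R, ?_⟩
        intro w hw x
        rw [Multiset.erase_cons_head] at hw
        have hdom : Nf x vR ≤ Nf x a := by
          have := sorted_Nf hs x; omega
        rw [hRdecomp] at hw
        rcases Multiset.mem_cons.mp hw with rfl | hw
        · exact hdom
        · exact le_trans (hmax w hw x) hdom
      · -- vR dominates a
        refine ⟨vR, Multiset.mem_cons_of_mem hvR, ?_⟩
        intro w hw x
        have hdom : Nf x a ≤ Nf x vR := by
          have := sorted_Nf hs x; omega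
        by_cases hav : vR = a
        · subst hav
          rw [Multiset.erase_cons_head] at hw
          rw [hRdecomp] at hw
          rcases Multiset.mem_cons.mp hw with rfl | hw
          · exact le_refl _
          · exact hmax w hw x
        · rw [Multiset.erase_cons_tail_of_mem hvR] at hw
          rcases Multiset.mem_cons.mp hw with rfl | hw
          · exact hdom
          · exact hmax w hw x

lemma max_sandwich {M : Multiset (Multiset (Fin n))} (hM : PS M) {v : Multiset (Fin n)}
    (hv : v ∈ M) (hmax : ∀ w ∈ M.erase v, ∀ x, Nf x w ≤ Nf x v) (x : Fin n) :
    Nf x M.sum ≤ Multiset.card M * Nf x v ∧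
    Multiset.card M * Nf x v ≤ Nf x M.sum + (Multiset.card M - 1) := by
  set N := M.erase v with hN
  have hdecomp : M = v ::ₘ N := (Multiset.cons_erase hv).symm
  have hcard : Multiset.card M = Multiset.card N + 1 := by rw [hdecomp]; simp
  have hsum : Nf x M.sum = Nf x v + (N.map (Nf x)).sum := by
    rw [hdecomp, Multiset.sum_cons, Nf_add, Nf_sum]
  have hub : (N.map (Nf x)).sum ≤ Multiset.card N * Nf x v := by
    have : ∀ y ∈ N.map (Nf x), y ≤ Nf x v := by
      rintro y hy
      obtain ⟨w, hw, rfl⟩ := Multiset.mem_map.mp hy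
      exact hmax w hw x
    calc (N.map (Nf x)).sum ≤ Multiset.card (N.map (Nf x)) • Nf x v :=
          Multiset.sum_le_card_nsmul _ _ this
      _ = Multiset.card N * Nf x v := by rw [Multiset.card_map]; simp
  have hlb : Multiset.card N * Nf x v ≤ (N.map (Nf x)).sum + Multiset.card N := by
    have h1 : (N.map (fun w => Nf x w)).sum + Multiset.card N
        = (N.map (fun w => Nf x w + 1)).sum := by
      induction N using Multiset.induction with
      | empty => simp
      | cons a s ih => simp only [Multiset.map_cons, Multiset.sum_cons, Multiset.card_cons]; omega
    have h2 : ∀ y ∈ N.map (fun w => Nf x w + 1), Nf x v ≤ y := by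
      rintro y hy
      obtain ⟨w, hw, rfl⟩ := Multiset.mem_map.mp hy
      have hlt : Nf x v ≤ Nf x w + 1 := (sorted_Nf_le (hM v hv w hw) x).2
      exact hlt
    calc Multiset.card N * Nf x v
        = Multiset.card (N.map (fun w => Nf x w + 1)) • Nf x v := by
          rw [Multiset.card_map]; simp
      _ ≤ (N.map (fun w => Nf x w + 1)).sum := Multiset.card_nsmul_le_sum h2
      _ = (N.map (Nf x)).sum + Multiset.card N := h1.symm
  have hmul : Multiset.card M * Nf x v = Multiset.card N * Nf x v + Nf x v := by
    rw [hcard]; ring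
  constructor
  · rw [hsum, hmul]; omega
  · rw [hsum, hmul, hcard]; omega

theorem PS_unique : ∀ (q : ℕ) (M M' : Multiset (Multiset (Fin n))),
    Multiset.card M = q → Multiset.card M' = q → PS M → PS M' → M.sum = M'.sum → M = M' := by
  intro q
  induction q with
  | zero =>
    intro M M' hM hM' _ _ _
    rw [Multiset.card_eq_zero] at hM hM'
    rw [hM, hM']
  | succ q ih =>
    intro M M' hcM hcM' hPS hPS' hsum
    have hne : M ≠ 0 := by
      intro h; rw [h] at hcM; simp at hcM
    have hne' : M' ≠ 0 := by
      intro h; rw [h] at hcM'; simp at hcM'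
    obtain ⟨v, hv, hmax⟩ := exists_max hPS hne
    obtain ⟨v', hv', hmax'⟩ := exists_max hPS' hne'
    have hvv' : v = v' := by
      apply Nf_ext
      intro x
      have s1 := max_sandwich hPS hv hmax x
      have s2 := max_sandwich hPS' hv' hmax' x
      rw [hsum] at s1
      rw [hcM] at s1
      rw [hcM'] at s2
      have hq : q + 1 - 1 = q := by omega
      rw [hq] at s1 s2
      have key : ∀ (a b S : ℕ), S ≤ (q+1)*a → (q+1)*a ≤ S + q →
          S ≤ (q+1)*b → (q+1)*b ≤ S + q → a ≤ b := by
        intro a b S h1 h2 h3 h4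
        by_contra hab
        push_neg at hab
        have hm : (q+1)*(b+1) ≤ (q+1)*a := Nat.mul_le_mul_left _ (by omega)
        have hr : (q+1)*(b+1) = (q+1)*b + (q+1) := by ring
        omega
      exact le_antisymm (key _ _ _ s1.1 s1.2 s2.1 s2.2) (key _ _ _ s2.1 s2.2 s1.1 s1.2)
    subst hvv'
    have hMd : M = v ::ₘ M.erase v := (Multiset.cons_erase hv).symm
    have hM'd : M' = v ::ₘ M'.erase v := (Multiset.cons_erase hv').symm
    have hrec : M.erase v = M'.erase v := by
      apply ih
      · rw [Multiset.card_erase_of_mem hv, hcM]; rfl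
      · rw [Multiset.card_erase_of_mem hv', hcM']; rfl
      · exact PS_mono (Multiset.erase_le v M) hPS
      · exact PS_mono (Multiset.erase_le v M') hPS'
      · have e1 : v + (M.erase v).sum = M.sum := by
          conv_rhs => rw [hMd]
          rw [Multiset.sum_cons]
        have e2 : v + (M'.erase v).sum = M'.sum := by
          conv_rhs => rw [hM'd]
          rw [Multiset.sum_cons]
        have := e1.trans (hsum.trans e2.symm)
        exact add_left_cancel this
    rw [hMd, hM'd, hrec]

/-- Primary potential of a monomial. -/
def Pm (z : Multiset (Fin n)) : ℕ := ∑ x : Fin n, (Nf x z)^2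
/-- Secondary potential of a monomial. -/
def sm (z : Multiset (Fin n)) : ℕ := ∑ x : Fin n, Nf x z

def PM (M : Multiset (Multiset (Fin n))) : ℕ := (M.map Pm).sum
def SM (M : Multiset (Multiset (Fin n))) : ℕ := (M.map (fun z => (sm z)^2)).sum

/-- The termination measure. -/
def mu (M : Multiset (Multiset (Fin n))) : ℕ :=
  PM M * ((sm M.sum)^2 + 1) + ((sm M.sum)^2 - SM M)

lemma sm_add (v w : Multiset (Fin n)) : sm (v + w) = sm v + sm w := by
  simp [sm, Nf_add, Finset.sum_add_distrib]

@[simp] lemma PM_cons (z : Multiset (Fin n)) (M : Multiset (Multiset (Fin n))) :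
    PM (z ::ₘ M) = Pm z + PM M := by simp [PM]

@[simp] lemma SM_cons (z : Multiset (Fin n)) (M : Multiset (Multiset (Fin n))) :
    SM (z ::ₘ M) = (sm z)^2 + SM M := by simp [SM]

lemma SM_le (M : Multiset (Multiset (Fin n))) : SM M ≤ (sm M.sum)^2 := by
  induction M using Multiset.induction with
  | empty => simp [SM]
  | cons a s ih =>
    rw [SM_cons, Multiset.sum_cons, sm_add]
    calc (sm a)^2 + SM s ≤ (sm a)^2 + (sm s.sum)^2 := by omega
      _ ≤ (sm a + sm s.sum)^2 := by
          linarith [Nat.zero_le (2 * sm a * sm s.sum), add_sq (sm a) (sm s.sum)]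

lemma sq_pair_le {a b c d : ℕ} (hsum : c + d = a + b) (hc : c = (a+b+1)/2) (hd : d = (a+b)/2) :
    c^2 + d^2 ≤ a^2 + b^2 := by
  have hdisj : c = d ∨ (c = d + 1 ∧ a ≠ b) := by omega
  zify
  have hcd : ((c:ℤ) - d)^2 ≤ ((a:ℤ) - b)^2 := by
    rcases hdisj with h | ⟨h, hab⟩
    · simp [h]
      positivity
    · have hcd1 : ((c:ℤ) - d) = 1 := by rw [h]; push_cast; ring
      rw [hcd1]
      have hz : (a:ℤ) - b ≠ 0 := by
        intro hh
        apply hab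
        omega
      have h1 : (1:ℤ) ≤ |(a:ℤ) - b| := Int.one_le_abs hz
      nlinarith [h1, sq_abs ((a:ℤ) - b)]
  have hs : (c:ℤ) + d = (a:ℤ) + b := by exact_mod_cast hsum
  nlinarith [hcd, hs]

lemma sq_pair_lt {a b c d : ℕ} (hsum : c + d = a + b) (hc : c = (a+b+1)/2) (hd : d = (a+b)/2)
    (hfar : a + 2 ≤ b ∨ b + 2 ≤ a) : c^2 + d^2 < a^2 + b^2 := by
  have hcd1 : c ≤ d + 1 := by omega
  have hdc : d ≤ c := by omega
  zify
  have hcd : ((c:ℤ) - d)^2 ≤ 1 := by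
    have h1 : (0:ℤ) ≤ (c:ℤ) - d := by omega
    have h2 : (c:ℤ) - d ≤ 1 := by omega
    nlinarith
  have hab : (4:ℤ) ≤ ((a:ℤ) - b)^2 := by
    rcases hfar with h | h
    · have : (b:ℤ) - a ≥ 2 := by omega
      nlinarith
    · have : (a:ℤ) - b ≥ 2 := by omega
      nlinarith
  have hs : (c:ℤ) + d = (a:ℤ) + b := by exact_mod_cast hsum
  nlinarith [hcd, hab, hs]

lemma sortPair_comm (v w : Multiset (Fin n)) : sortPair v w = sortPair w v := by
  rw [sortPair, sortPair, add_comm]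

/-- The key termination step: replacing an unsorted pair by its sorting strictly
decreases the measure. -/
theorem step_decrease {v w : Multiset (Fin n)} (h1 : ¬ IsSortedPair v w)
    (h2 : ¬ IsSortedPair w v) (R : Multiset (Multiset (Fin n))) :
    mu ((sortPair v w).1 ::ₘ (sortPair v w).2 ::ₘ R) < mu (v ::ₘ w ::ₘ R) := by
  set v' := (sortPair v w).1 with hv'
  set w' := (sortPair v w).2 with hw'
  have hNf : ∀ x, Nf x v' = (Nf x v + Nf x w + 1)/2 ∧ Nf x w' = (Nf x v + Nf x w)/2 := by
    intro x
    have h := Nf_sortPair x v w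
    rwa [Nf_add] at h
  have hsumadd : v' + w' = v + w := sortPair_add v w
  have hsum_eq : (v' ::ₘ w' ::ₘ R).sum = (v ::ₘ w ::ₘ R).sum := by
    simp only [Multiset.sum_cons, ← add_assoc, hsumadd]
  have hNf_sum : ∀ x, Nf x v' + Nf x w' = Nf x v + Nf x w := by
    intro x
    rw [← Nf_add, ← Nf_add, hsumadd]
  by_cases hcase : ∃ x : Fin n, Nf x v + 2 ≤ Nf x w ∨ Nf x w + 2 ≤ Nf x v
  · -- primary strictly decreases
    obtain ⟨x₀, hx₀⟩ := hcase
    have hPMlt : Pm v' + Pm w' < Pm v + Pm w := by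
      rw [Pm, Pm, Pm, Pm, ← Finset.sum_add_distrib, ← Finset.sum_add_distrib]
      apply Finset.sum_lt_sum
      · intro x _
        exact sq_pair_le (hNf_sum x) (hNf x).1 (hNf x).2
      · exact ⟨x₀, Finset.mem_univ _,
          sq_pair_lt (hNf_sum x₀) (hNf x₀).1 (hNf x₀).2 hx₀⟩
    have hPM : PM (v' ::ₘ w' ::ₘ R) < PM (v ::ₘ w ::ₘ R) := by
      simp only [PM_cons]
      omega
    rw [mu, mu, hsum_eq]
    set E := (sm (v ::ₘ w ::ₘ R).sum)^2 with hE
    have hb1 : E - SM (v' ::ₘ w' ::ₘ R) ≤ E := Nat.sub_le _ _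
    have hb2 : PM (v' ::ₘ w' ::ₘ R) * (E+1) + (E+1) ≤ PM (v ::ₘ w ::ₘ R) * (E+1) := by
      have : PM (v' ::ₘ w' ::ₘ R) + 1 ≤ PM (v ::ₘ w ::ₘ R) := hPM
      nlinarith
    omega
  · -- primary equal, secondary strictly increases
    push_neg at hcase
    have hPMeq : Pm v' + Pm w' = Pm v + Pm w := by
      rw [Pm, Pm, Pm, Pm, ← Finset.sum_add_distrib, ← Finset.sum_add_distrib]
      apply Finset.sum_congr rfl
      intro x _
      have h := hNf x
      have hmax : (Nf x v' = Nf x v ∧ Nf x w' = Nf x w) ∨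
          (Nf x v' = Nf x w ∧ Nf x w' = Nf x v) := by
        have := hcase x
        omega
      rcases hmax with ⟨ha, hb⟩ | ⟨ha, hb⟩ <;> rw [ha, hb] <;> ring
    -- sm v' = sum of maxes
    have hsmmax : ∀ x, Nf x v' = max (Nf x v) (Nf x w) ∧ Nf x w' = min (Nf x v) (Nf x w) := by
      intro x
      have h := hNf x
      have := hcase x
      constructor <;> omega
    have hsm_ge_v : sm v ≤ sm v' := by
      rw [sm, sm]
      apply Finset.sum_le_sum
      intro x _
      rw [(hsmmax x).1]
      exact le_max_left _ _
    have hsm_ge_w : sm w ≤ sm v' := by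
      rw [sm, sm]
      apply Finset.sum_le_sum
      intro x _
      rw [(hsmmax x).1]
      exact le_max_right _ _
    have hsm_sum : sm v' + sm w' = sm v + sm w := by
      rw [← sm_add, ← sm_add, hsumadd]
    -- strictness: sm v' > sm v and sm v' > sm w
    have hstrict_v : sm v' ≠ sm v := by
      intro heq
      have hall : ∀ x, Nf x v' = Nf x v := by
        intro x
        by_contra hne
        have hlt : Nf x v < Nf x v' := by
          have := (hsmmax x).1
          omega
        have : sm v < sm v' := by
          rw [sm, sm]
          apply Finset.sum_lt_sum
          · intro y _
            rw [(hsmmax y).1]; exact le_max_left _ _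
          · exact ⟨x, Finset.mem_univ _, hlt⟩
        omega
      have hveq : v' = v := Nf_ext hall
      have hweq : w' = w := by
        apply Nf_ext
        intro x
        have := hNf_sum x
        rw [hall x] at this
        omega
      apply h1
      have hsp : sortPair v w = (v', w') := rfl
      rw [IsSortedPair, hsp, hveq, hweq]
    have hstrict_w : sm v' ≠ sm w := by
      intro heq
      have hall : ∀ x, Nf x v' = Nf x w := by
        intro x
        by_contra hne
        have hlt : Nf x w < Nf x v' := by
          have := (hsmmax x).1
          omega
        have : sm w < sm v' := by
          rw [sm, sm]
          apply Finset.sum_lt_sum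
          · intro y _
            rw [(hsmmax y).1]; exact le_max_right _ _
          · exact ⟨x, Finset.mem_univ _, hlt⟩
        omega
      have hveq : v' = w := Nf_ext hall
      have hweq : w' = v := by
        apply Nf_ext
        intro x
        have := hNf_sum x
        rw [hall x] at this
        omega
      apply h2
      have hsp : sortPair v w = (v', w') := rfl
      rw [IsSortedPair, sortPair_comm w v, hsp, hveq, hweq]
    have hSMlt : (sm v)^2 + (sm w)^2 < (sm v')^2 + (sm w')^2 := by
      have hx1 : sm v < sm v' := lt_of_le_of_ne hsm_ge_v (fun h => hstrict_v h.symm)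
      have hx2 : sm w < sm v' := lt_of_le_of_ne hsm_ge_w (fun h => hstrict_w h.symm)
      nlinarith [hsm_sum]
    have hSM : SM (v ::ₘ w ::ₘ R) < SM (v' ::ₘ w' ::ₘ R) := by
      simp only [SM_cons]
      omega
    have hPM : PM (v' ::ₘ w' ::ₘ R) = PM (v ::ₘ w ::ₘ R) := by
      simp only [PM_cons]; omega
    have hSMle : SM (v' ::ₘ w' ::ₘ R) ≤ (sm (v ::ₘ w ::ₘ R).sum)^2 := by
      rw [← hsum_eq]
      exact SM_le _
    rw [mu, mu, hsum_eq, hPM]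
    omega

open MvPolynomial

variable {m : ℕ} {K : Type*} [CommSemiring K]

/-- Product of variables indexed by a multiset. -/
noncomputable def PXgen {σ : Type*} (K : Type*) [CommSemiring K] (A : Multiset σ) : MvPolynomial σ K :=
  (A.map MvPolynomial.X).prod

@[simp] lemma PXgen_zero {σ : Type*} : (PXgen K (0 : Multiset σ)) = 1 := by simp [PXgen]

@[simp] lemma PXgen_cons {σ : Type*} (i : σ) (A : Multiset σ) :
    PXgen K (i ::ₘ A) = X i * PXgen K A := by simp [PXgen]

lemma PXgen_add {σ : Type*} (A B : Multiset σ) :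
    PXgen K (A + B) = PXgen K A * PXgen K B := by
  simp [PXgen, Multiset.map_add]

lemma PXgen_monomial {σ : Type*} [DecidableEq σ] (A : Multiset σ) :
    PXgen K A = monomial (Multiset.toFinsupp A) 1 := by
  induction A using Multiset.induction with
  | empty => simp [monomial_zero', map_zero]
  | cons i A ih =>
    rw [PXgen_cons, ih]
    have hX : (X i : MvPolynomial σ K) = monomial (Finsupp.single i 1) 1 := rfl
    rw [hX, monomial_mul, one_mul]
    congr 1
    have : (i ::ₘ A) = ({i} : Multiset σ) + A := by rw [Multiset.singleton_add]
    rw [this, map_add, Multiset.toFinsupp_singleton, add_comm]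

variable {u : Fin m → Multiset (Fin n)}

/-- The set of sorting relations. -/
def JS (u : Fin m → Multiset (Fin n)) (R : Type*) [CommRing R] :
    Set (MvPolynomial (Fin m) R) :=
  { f : MvPolynomial (Fin m) R |
        ∃ i j k l : Fin m, ¬ IsSortedPair (u i) (u j) ∧
          sortPair (u i) (u j) = (u k, u l) ∧
          f = X i * X j - X k * X l }

lemma pair_split (hinj : Function.Injective u) {B : Multiset (Fin m)}
    {v w : Multiset (Fin n)} (hv : v ∈ B.map u) (hw : w ∈ (B.map u).erase v) :
    ∃ i j : Fin m, i ∈ B ∧ j ∈ B.erase i ∧ u i = v ∧ u j = w := by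
  obtain ⟨i, hiB, hui⟩ := Multiset.mem_map.mp hv
  rw [← hui, ← Multiset.map_erase u hinj] at hw
  obtain ⟨j, hjB, huj⟩ := Multiset.mem_map.mp hw
  exact ⟨i, j, hiB, hjB, hui, huj⟩

theorem binomial_mem {K : Type*} [Field K] (hinj : Function.Injective u)
    (hsort : ∀ i j : Fin m, ∃ k l : Fin m, sortPair (u i) (u j) = (u k, u l)) :
    ∀ (N : ℕ) (A B : Multiset (Fin m)), mu (A.map u) + mu (B.map u) ≤ N →
      Multiset.card A = Multiset.card B → (A.map u).sum = (B.map u).sum →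
      (PXgen K A) - PXgen K B ∈ Ideal.span (JS u K) := by
  intro N
  induction N using Nat.strong_induction_on with
  | _ N ih =>
    intro A B hmu hcard hsum
    -- generic step construction
    have step : ∀ C : Multiset (Fin m), ¬ PS (C.map u) →
        ∃ C' : Multiset (Fin m),
          mu (C'.map u) < mu (C.map u) ∧
          Multiset.card C' = Multiset.card C ∧
          (C'.map u).sum = (C.map u).sum ∧
          (PXgen K C) - PXgen K C' ∈ Ideal.span (JS u K) := by
      intro C hC
      rw [PS] at hC
      push_neg at hC
      obtain ⟨v, hv, w, hw, hnvw, hnwv⟩ := hC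
      obtain ⟨i, j, hiC, hjC, hui, huj⟩ := pair_split hinj hv hw
      obtain ⟨k, l, hkl⟩ := hsort i j
      set R := (C.erase i).erase j with hR
      have hCdec : C = i ::ₘ j ::ₘ R := by
        rw [hR]
        rw [Multiset.cons_erase hjC, Multiset.cons_erase hiC]
      have husum : u k + u l = u i + u j := by
        have h := sortPair_add (u i) (u j)
        rw [hkl] at h
        exact h
      refine ⟨k ::ₘ l ::ₘ R, ?_, ?_, ?_, ?_⟩
      · -- measure decreases
        have hmap : (k ::ₘ l ::ₘ R).map u
            = (sortPair v w).1 ::ₘ (sortPair v w).2 ::ₘ (R.map u) := by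
          rw [Multiset.map_cons, Multiset.map_cons]
          rw [← hui, ← huj, hkl]
        have hmapC : C.map u = v ::ₘ w ::ₘ (R.map u) := by
          rw [hCdec, Multiset.map_cons, Multiset.map_cons, hui, huj]
        rw [hmap, hmapC]
        exact step_decrease hnvw hnwv (R.map u)
      · rw [hCdec]; simp
      · rw [hCdec]
        simp only [Multiset.map_cons, Multiset.sum_cons, ← add_assoc, husum]
      · have hfac : (PXgen K C) - PXgen K (k ::ₘ l ::ₘ R)
            = (X i * X j - X k * X l) * PXgen K R := by
          rw [hCdec, PXgen_cons, PXgen_cons, PXgen_cons, PXgen_cons]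
          ring
        rw [hfac]
        apply Ideal.mul_mem_right
        apply Ideal.subset_span
        refine ⟨i, j, k, l, ?_, hkl, rfl⟩
        rw [hui, huj]
        exact hnvw
    by_cases hA : PS (A.map u)
    · by_cases hB : PS (B.map u)
      · -- both sorted: equal
        have hMeq : A.map u = B.map u := by
          apply PS_unique (Multiset.card A) _ _ (by simp) (by simp [← hcard]) hA hB hsum
        have hAB : A = B := Multiset.map_injective hinj hMeq
        rw [hAB, sub_self]
        exact Ideal.zero_mem _
      · obtain ⟨B', hmu', hcard', hsum', hJ⟩ := step B hB
        have hrec : (PXgen K A) - PXgen K B' ∈ Ideal.span (JS u K) := by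
          refine ih (mu (A.map u) + mu (B'.map u)) (by omega) A B' le_rfl ?_ ?_
          · omega
          · rw [hsum']; exact hsum
        have : (PXgen K A) - PXgen K B
            = ((PXgen K A) - PXgen K B') - ((PXgen K B) - PXgen K B') := by ring
        rw [this]
        exact sub_mem hrec hJ
    · obtain ⟨A', hmu', hcard', hsum', hJ⟩ := step A hA
      have hrec : (PXgen K A') - PXgen K B ∈ Ideal.span (JS u K) := by
        refine ih (mu (A'.map u) + mu (B.map u)) (by omega) A' B le_rfl ?_ ?_
        · omega
        · rw [hsum']; exact hsum
      have : (PXgen K A) - PXgen K B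
          = ((PXgen K A) - PXgen K A') + ((PXgen K A') - PXgen K B) := by ring
      rw [this]
      exact add_mem hJ hrec

section PhiLemmas

variable {K : Type*} [Field K] (u : Fin m → Multiset (Fin n))
  (φ : MvPolynomial (Fin m) K →ₐ[K] Polynomial (MvPolynomial (Fin n) K))
  (hφ : φ = MvPolynomial.aeval (fun i : Fin m =>
      Polynomial.C (((u i).map MvPolynomial.X).prod) * Polynomial.X))

include hφ

lemma phi_X (a : Fin m) : φ (X a) = Polynomial.C (PXgen K (u a)) * Polynomial.X := by
  rw [hφ, aeval_X]; rfl

lemma phi_PX (A : Multiset (Fin m)) :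
    φ (PXgen K A) = Polynomial.monomial (Multiset.card A) (PXgen K ((A.map u).sum)) := by
  induction A using Multiset.induction with
  | empty =>
    simp only [PXgen_zero, map_one, Multiset.card_zero, Multiset.map_zero, Multiset.sum_zero]
    rw [Polynomial.monomial_zero_one]
  | cons i A ih =>
    rw [PXgen_cons, map_mul, ih, phi_X u φ hφ i, Polynomial.C_mul_X_eq_monomial,
      Polynomial.monomial_mul_monomial]
    simp only [Multiset.card_cons, Multiset.map_cons, Multiset.sum_cons, PXgen_add]
    rw [add_comm 1 (Multiset.card A)]

lemma phi_monomial (s : Fin m →₀ ℕ) (c : K) :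
    φ (monomial s c) = Polynomial.monomial (Multiset.card (Finsupp.toMultiset s))
      (MvPolynomial.monomial (Multiset.toFinsupp (((Finsupp.toMultiset s).map u).sum)) c) := by
  have h1 : (monomial s c : MvPolynomial (Fin m) K)
      = MvPolynomial.C c * PXgen K (Finsupp.toMultiset s) := by
    rw [PXgen_monomial, Finsupp.toMultiset_toFinsupp, C_mul_monomial, mul_one]
  rw [h1, map_mul, phi_PX u φ hφ]
  have h2 : φ (MvPolynomial.C c) = Polynomial.C (MvPolynomial.C c) := by
    have := φ.commutes c
    rwa [MvPolynomial.algebraMap_eq, Polynomial.algebraMap_apply,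
      MvPolynomial.algebraMap_eq] at this
  rw [h2, Polynomial.C_mul_monomial, PXgen_monomial, C_mul_monomial, mul_one]

lemma ker_le_span (hinj : Function.Injective u)
    (hsort : ∀ i j : Fin m, ∃ k l : Fin m, sortPair (u i) (u j) = (u k, u l)) :
    RingHom.ker φ ≤ Ideal.span (JS u K) := by
  have main : ∀ (N : ℕ) (f : MvPolynomial (Fin m) K), f.support.card ≤ N → φ f = 0 →
      f ∈ Ideal.span (JS u K) := by
    intro N
    induction N with
    | zero =>
      intro f hcard _
      have : f.support = ∅ := Finset.card_eq_zero.mp (Nat.le_zero.mp hcard)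
      rw [MvPolynomial.support_eq_empty.mp this]
      exact Ideal.zero_mem _
    | succ N ihN =>
      intro f hcard hker
      by_cases hf0 : f = 0
      · rw [hf0]; exact Ideal.zero_mem _
      · obtain ⟨s₀, hs₀⟩ := (MvPolynomial.support_nonempty.mpr hf0)
        set q : (Fin m →₀ ℕ) → ℕ := fun s => Multiset.card (Finsupp.toMultiset s) with hq
        set tw : (Fin m →₀ ℕ) → (Fin n →₀ ℕ) :=
          fun s => Multiset.toFinsupp (((Finsupp.toMultiset s).map u).sum) with htw
        -- coefficient extraction
        have hform : φ f = ∑ s ∈ f.support,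
            Polynomial.monomial (q s) (MvPolynomial.monomial (tw s) (MvPolynomial.coeff s f)) := by
          conv_lhs => rw [← MvPolynomial.support_sum_monomial_coeff f]
          rw [map_sum]
          exact Finset.sum_congr rfl fun s _ => phi_monomial u φ hφ s _
        have h1 : (0:MvPolynomial (Fin n) K) = ∑ s ∈ f.support,
            if q s = q s₀ then (MvPolynomial.monomial (tw s) (MvPolynomial.coeff s f)) else 0 := by
          have := congrArg (fun p => Polynomial.coeff p (q s₀)) (hker.symm.trans hform)
          simpa [Polynomial.finset_sum_coeff, Polynomial.coeff_monomial] using this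
        have h2 : (0:K) = ∑ s ∈ f.support,
            if q s = q s₀ ∧ tw s = tw s₀ then MvPolynomial.coeff s f else 0 := by
          have h1' := congrArg (fun p => MvPolynomial.coeff (tw s₀) p) h1
          simp only [MvPolynomial.coeff_zero, MvPolynomial.coeff_sum] at h1'
          refine h1'.trans ?_
          refine Finset.sum_congr rfl fun s _ => ?_
          by_cases hqs : q s = q s₀
          · by_cases hts : tw s = tw s₀
            · rw [if_pos hqs, if_pos ⟨hqs, hts⟩, hts, MvPolynomial.coeff_monomial, if_pos rfl]
            · rw [if_pos hqs, if_neg (by tauto), MvPolynomial.coeff_monomial, if_neg hts]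
          · rw [if_neg hqs, if_neg (by tauto), MvPolynomial.coeff_zero]
        rw [← Finset.sum_filter] at h2
        set T := f.support.filter (fun s => q s = q s₀ ∧ tw s = tw s₀) with hT
        have hs₀T : s₀ ∈ T := by
          rw [hT, Finset.mem_filter]
          exact ⟨hs₀, rfl, rfl⟩
        have hex : ∃ s₁ ∈ T, s₁ ≠ s₀ := by
          by_contra hcon
          push_neg at hcon
          have hTsing : T = {s₀} := Finset.eq_singleton_iff_unique_mem.mpr ⟨hs₀T, hcon⟩
          rw [hTsing, Finset.sum_singleton] at h2
          exact (MvPolynomial.mem_support_iff.mp hs₀) h2.symm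
        obtain ⟨s₁, hs₁T, hs₁ne⟩ := hex
        have hs₁props := Finset.mem_filter.mp hs₁T
        have hs₁supp : s₁ ∈ f.support := hs₁props.1
        have hq01 : q s₁ = q s₀ := hs₁props.2.1
        have htw01 : tw s₁ = tw s₀ := hs₁props.2.2
        have hWeq : ((Finsupp.toMultiset s₁).map u).sum = ((Finsupp.toMultiset s₀).map u).sum :=
          Multiset.toFinsupp.injective htw01
        -- the binomial
        set c := MvPolynomial.coeff s₀ f with hc
        set bin : MvPolynomial (Fin m) K := monomial s₀ 1 - monomial s₁ 1 with hbin
        have hbinPX : bin = PXgen K (Finsupp.toMultiset s₀) - PXgen K (Finsupp.toMultiset s₁) := by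
          rw [hbin, PXgen_monomial, PXgen_monomial, Finsupp.toMultiset_toFinsupp,
            Finsupp.toMultiset_toFinsupp]
        have hbinJ : bin ∈ Ideal.span (JS u K) := by
          rw [hbinPX]
          exact binomial_mem hinj hsort
            (mu ((Finsupp.toMultiset s₀).map u) + mu ((Finsupp.toMultiset s₁).map u))
            _ _ le_rfl hq01.symm hWeq.symm
        have hbinker : φ bin = 0 := by
          have hqq : Multiset.card (Finsupp.toMultiset s₁) = Multiset.card (Finsupp.toMultiset s₀) := hq01
          rw [hbin, map_sub, phi_monomial u φ hφ, phi_monomial u φ hφ, hqq, hWeq, sub_self]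
        set g : MvPolynomial (Fin m) K := f - MvPolynomial.C c * bin with hg
        have hgker : φ g = 0 := by
          rw [hg, map_sub, map_mul, hbinker, mul_zero, sub_zero, hker]
        have hcoeffg : ∀ s, MvPolynomial.coeff s g = MvPolynomial.coeff s f
            - c * ((if s₀ = s then 1 else 0) - (if s₁ = s then 1 else 0)) := by
          intro s
          rw [hg, MvPolynomial.coeff_sub, MvPolynomial.coeff_C_mul, hbin,
            MvPolynomial.coeff_sub, MvPolynomial.coeff_monomial, MvPolynomial.coeff_monomial]
        have hgsupp : g.support ⊆ f.support.erase s₀ := by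
          intro s hs
          rw [MvPolynomial.mem_support_iff] at hs
          rw [Finset.mem_erase]
          have hcoeffs := hcoeffg s
          constructor
          · intro hss
            subst hss
            rw [if_pos rfl, if_neg hs₁ne] at hcoeffs
            simp [hc] at hcoeffs
            exact hs hcoeffs
          · by_contra hnsupp
            rw [MvPolynomial.mem_support_iff, not_not] at hnsupp
            have hsne0 : s ≠ s₀ := by
              intro hss; subst hss
              exact (MvPolynomial.mem_support_iff.mp hs₀) hnsupp
            have hsne1 : s ≠ s₁ := by
              intro hss; subst hss
              exact (MvPolynomial.mem_support_iff.mp hs₁supp) hnsupp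
            rw [if_neg (Ne.symm hsne0), if_neg (Ne.symm hsne1), hnsupp] at hcoeffs
            simp at hcoeffs
            exact hs hcoeffs
        have hgcard : g.support.card ≤ N := by
          have h1 : g.support.card ≤ (f.support.erase s₀).card := Finset.card_le_card hgsupp
          have h2 : (f.support.erase s₀).card = f.support.card - 1 :=
            Finset.card_erase_of_mem hs₀
          omega
        have hgJ : g ∈ Ideal.span (JS u K) := ihN g hgcard hgker
        have hfg : f = g + MvPolynomial.C c * bin := by rw [hg]; ring
        rw [hfg]
        exact add_mem hgJ (Ideal.mul_mem_left _ _ hbinJ)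
  intro f hf
  rw [RingHom.mem_ker] at hf
  exact main f.support.card f le_rfl hf

lemma span_le_ker : Ideal.span (JS u K) ≤ RingHom.ker φ := by
  rw [Ideal.span_le]
  rintro f ⟨i, j, k, l, hns, hkl, rfl⟩
  rw [SetLike.mem_coe, RingHom.mem_ker]
  have husum : u k + u l = u i + u j := by
    have h := sortPair_add (u i) (u j)
    rw [hkl] at h
    exact h
  have hx : ∀ a b : Fin m, φ (X a * X b)
      = Polynomial.C (PXgen K (u a) * PXgen K (u b)) * (Polynomial.X * Polynomial.X) := by
    intro a b
    rw [map_mul, phi_X u φ hφ, phi_X u φ hφ, Polynomial.C_mul]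
    ring
  rw [map_sub, hx, hx, ← PXgen_add, ← PXgen_add, husum, sub_self]

end PhiLemmas

end SortAux


/-- let `B = {u_1,…,u_m}` be a finite sortable set of monomials in
`S = K[x_1,…,x_n]` and `φ : K[y_1,…,y_m] → S[t]`, `φ(y_i) = u_i t`.  Then `ker φ` is
generated by the binomials `y_i y_j − y_k y_l` over all unsorted pairs `(u_i, u_j)` with
`sort(u_i, u_j) = (u_k, u_l)`. -/
theorem toric_ideal_of_sortable_generated_by_sorting_relations
    (n m : ℕ) (K : Type*) [Field K]
    (u : Fin m → Multiset (Fin n)) (hinj : Function.Injective u)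
    (hsort : ∀ i j : Fin m, ∃ k l : Fin m, sortPair (u i) (u j) = (u k, u l))
    (φ : MvPolynomial (Fin m) K →ₐ[K] Polynomial (MvPolynomial (Fin n) K))
    (hφ : φ = MvPolynomial.aeval (fun i : Fin m =>
      Polynomial.C (((u i).map MvPolynomial.X).prod) * Polynomial.X)) :
    RingHom.ker φ =
      Ideal.span { f : MvPolynomial (Fin m) K |
        ∃ i j k l : Fin m, ¬ IsSortedPair (u i) (u j) ∧
          sortPair (u i) (u j) = (u k, u l) ∧
          f = X i * X j - X k * X l } := by
  exact le_antisymm (SortAux.ker_le_span u φ hφ hinj hsort) (SortAux.span_le_ker u φ hφ)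
end

section
/- Let G be a proper interval graph on vertex set [n] = {1,…,n} and let C_1 and C_2 be minimal vertex covers of G. List the multiset union of C_1 and C_2 (so that each element of C_1 ∩ C_2 occurs twice) in increasing order as i_1 ≤ i_2 ≤ ⋯ ≤ i_k, and set D_1 = {i_ℓ : ℓ odd, 1 ≤ ℓ ≤ k} and D_2 = {i_ℓ : ℓ even, 1 ≤ ℓ ≤ k}. Then D_1 and D_2 are minimal vertex covers of G. (Equivalently, the vertex cover ideal I_G is a sortable ideal: sort(x_{C_1}, x_{C_2}) = (x_{D_1}, x_{D_2}) is again a pair of minimal generators of I_G.) -/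
/-- `C` is a vertex cover of the graph `G`: it meets every edge. -/
def IsVertexCover {W : Type*} (G : SimpleGraph W) (C : Finset W) : Prop :=
  ∀ a b : W, G.Adj a b → a ∈ C ∨ b ∈ C

/-- `C` is a minimal vertex cover of `G`: it is a vertex cover and no proper subset of `C`
is a vertex cover. -/
def IsMinVertexCover {W : Type*} (G : SimpleGraph W) (C : Finset W) : Prop :=
  IsVertexCover G C ∧ ∀ D : Finset W, D ⊆ C → IsVertexCover G D → D = C

/-- `G` is a proper interval graph (with respect to the labeling of its vertices by `Fin n`):
for all `i < j` with `{i,j}` an edge, the induced subgraph on `{i, i+1, …, j}` is complete. -/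
def IsProperInterval {n : ℕ} (G : SimpleGraph (Fin n)) : Prop :=
  ∀ i j : Fin n, i < j → G.Adj i j →
    ∀ a b : Fin n, i ≤ a → a ≤ j → i ≤ b → b ≤ j → a ≠ b → G.Adj a b
namespace AltSplitAux

lemma altSplit_cons {α : Type*} (a : α) (l : List α) :
    altSplit (a :: l) = (a :: (altSplit l).2, (altSplit l).1) := rfl

lemma fst_cons {α : Type*} (a : α) (l : List α) :
    (altSplit (a :: l)).1 = a :: (altSplit l).2 := rfl

lemma snd_cons {α : Type*} (a : α) (l : List α) :
    (altSplit (a :: l)).2 = (altSplit l).1 := rfl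

lemma count_altSplit {α : Type*} [DecidableEq α] (x : α) (l : List α) :
    (altSplit l).1.count x + (altSplit l).2.count x = l.count x := by
  induction l with
  | nil => rfl
  | cons a t ih =>
    rw [fst_cons, snd_cons]
    simp only [List.count_cons]
    omega

lemma count_fst_le {α : Type*} [DecidableEq α] (x : α) (l : List α) :
    (altSplit l).1.count x ≤ l.count x := by
  have := count_altSplit x l; omega

lemma count_snd_le {α : Type*} [DecidableEq α] (x : α) (l : List α) :
    (altSplit l).2.count x ≤ l.count x := by
  have := count_altSplit x l; omega

lemma count_le_one {α : Type*} [LinearOrder α] [DecidableEq α] (l : List α)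
    (hs : l.Pairwise (· ≤ ·)) (hc : ∀ y, l.count y ≤ 2) (x : α) :
    (altSplit l).1.count x ≤ 1 ∧ (altSplit l).2.count x ≤ 1 := by
  induction l with
  | nil => simp [altSplit]
  | cons a t ih =>
    rw [List.pairwise_cons] at hs
    have hc' : ∀ y, t.count y ≤ 2 := by
      intro y; have := hc y; rw [List.count_cons] at this; omega
    obtain ⟨ih1, ih2⟩ := ih hs.2 hc'
    rw [fst_cons, snd_cons]
    refine ⟨?_, ih1⟩
    simp only [List.count_cons]
    by_cases hxa : x = a
    · subst hxa
      have h0 : (altSplit t).2.count x = 0 := by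
        have hct : t.count x ≤ 1 := by
          have := hc x; simp [List.count_cons] at this; omega
        match t, hs with
        | [], _ => simp [altSplit]
        | b :: t', hs =>
          rw [snd_cons]
          by_cases hbx : b = x
          · subst hbx
            have h1 : t'.count b = 0 := by
              rw [List.count_cons] at hct; simpa using hct
            have h2 := count_fst_le b t'
            omega
          · have hxb : x < b := lt_of_le_of_ne (hs.1 b (List.mem_cons_self)) (Ne.symm hbx)
            have h1 : t'.count x = 0 := by
              rw [List.count_eq_zero]
              intro hmem
              have : b ≤ x := (List.pairwise_cons.mp hs.2).1 x hmem
              exact absurd this (not_le.mpr hxb)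
            have h2 := count_fst_le x t'
            omega
      simp [h0]
    · simp only [beq_iff_eq]
      rw [if_neg (fun hh : a = x => hxa hh.symm)]
      omega

lemma nodup_fst {α : Type*} [LinearOrder α] [DecidableEq α] (l : List α)
    (hs : l.Pairwise (· ≤ ·)) (hc : ∀ y, l.count y ≤ 2) : (altSplit l).1.Nodup :=
  List.nodup_iff_count_le_one.mpr fun x => (count_le_one l hs hc x).1

lemma nodup_snd {α : Type*} [LinearOrder α] [DecidableEq α] (l : List α)
    (hs : l.Pairwise (· ≤ ·)) (hc : ∀ y, l.count y ≤ 2) : (altSplit l).2.Nodup :=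
  List.nodup_iff_count_le_one.mpr fun x => (count_le_one l hs hc x).2


lemma mem_altSplit_iff {α : Type*} [LinearOrder α] [DecidableEq α] (l : List α)
    (hs : l.Pairwise (· ≤ ·)) (hc : ∀ y, l.count y ≤ 2) (x : α) :
    (x ∈ (altSplit l).1 ↔ l.count x = 2 ∨
      (l.count x = 1 ∧ (l.countP (fun y => decide (y < x))) % 2 = 0)) ∧
    (x ∈ (altSplit l).2 ↔ l.count x = 2 ∨
      (l.count x = 1 ∧ (l.countP (fun y => decide (y < x))) % 2 = 1)) := by
  induction l with
  | nil => simp [altSplit]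
  | cons a t ih =>
    rw [List.pairwise_cons] at hs
    have hc' : ∀ y, t.count y ≤ 2 := by
      intro y; have := hc y; rw [List.count_cons] at this; omega
    obtain ⟨ih1, ih2⟩ := ih hs.2 hc'
    have hcnt : ∀ y : α, (a :: t).count y = t.count y + if y = a then 1 else 0 := by
      intro y; rw [List.count_cons]
      by_cases h : y = a
      · simp [h]
      · simp [h, show a ≠ y from fun hh => h hh.symm]
    have hcp : (a :: t).countP (fun y => decide (y < x)) =
        t.countP (fun y => decide (y < x)) + if a < x then 1 else 0 := by
      rw [List.countP_cons]; simp
    rw [fst_cons, snd_cons, List.mem_cons]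
    rcases lt_trichotomy x a with hlt | heq | hgt
    · -- x < a : everything is ≥ a > x
      have hxt : t.count x = 0 := by
        rw [List.count_eq_zero]
        intro hmem
        exact absurd (hs.1 x hmem) (not_le.mpr hlt)
      have hx2 : x ∉ (altSplit t).2 := by
        intro hmem
        have := count_snd_le x t
        rw [hxt] at this
        have := List.count_pos_iff.mpr hmem
        omega
      have hx1 : x ∉ (altSplit t).1 := by
        intro hmem
        have := count_fst_le x t
        rw [hxt] at this
        have := List.count_pos_iff.mpr hmem
        omega
      have hxc : (a :: t).count x = 0 := by
        rw [hcnt, hxt, if_neg (ne_of_lt hlt)]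
      constructor
      · constructor
        · rintro (rfl | hmem)
          · exact absurd rfl (ne_of_lt hlt)
          · exact absurd hmem hx2
        · rw [hxc]; rintro (h | ⟨h, -⟩) <;> omega
      · constructor
        · intro hmem; exact absurd hmem hx1
        · rw [hxc]; rintro (h | ⟨h, -⟩) <;> omega
    · -- x = a
      subst heq
      have hcp0 : (x :: t).countP (fun y => decide (y < x)) = 0 := by
        rw [List.countP_eq_zero]
        intro y hy
        rcases List.mem_cons.mp hy with rfl | hmem
        · simp
        · simpa using not_lt.mpr (hs.1 y hmem)
      have hcp0' : t.countP (fun y => decide (y < x)) = 0 := by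
        rw [hcp] at hcp0; omega
      have hct1 : t.count x ≤ 1 := by
        have := hc x; rw [hcnt] at this; simp at this; omega
      have hcx : (x :: t).count x = t.count x + 1 := by rw [hcnt]; simp
      constructor
      · simp only [true_or, true_iff]
        rw [hcx, hcp0]
        omega
      · rw [ih1, hcx, hcp0, hcp0']
        constructor
        · rintro (h | ⟨h, h'⟩)
          · omega
          · left; omega
        · rintro (h | ⟨h, h'⟩)
          · right; exact ⟨by omega, rfl⟩
          · exact absurd h' (by norm_num)
    · -- a < x
      have hcx : (a :: t).count x = t.count x := by
        rw [hcnt, if_neg (ne_of_gt hgt)]; omega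
      have hcpx : (a :: t).countP (fun y => decide (y < x)) =
          t.countP (fun y => decide (y < x)) + 1 := by
        rw [hcp, if_pos hgt]
      constructor
      · constructor
        · rintro (rfl | hmem)
          · exact absurd hgt (lt_irrefl _)
          · rw [ih2] at hmem
            rw [hcx, hcpx]
            rcases hmem with h | ⟨h1, h2⟩
            · left; exact h
            · right; exact ⟨h1, by omega⟩
        · rw [hcx, hcpx]
          rintro (h | ⟨h1, h2⟩)
          · right; rw [ih2]; left; exact h
          · right; rw [ih2]; right; exact ⟨h1, by omega⟩
      · rw [ih1, hcx, hcpx]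
        constructor
        · rintro (h | ⟨h1, h2⟩)
          · left; exact h
          · right; exact ⟨h1, by omega⟩
        · rintro (h | ⟨h1, h2⟩)
          · left; exact h
          · right; exact ⟨h1, by omega⟩


lemma countP_altSplit {α : Type*} (p : α → Bool) (l : List α) :
    (altSplit l).1.countP p + (altSplit l).2.countP p = l.countP p := by
  induction l with
  | nil => rfl
  | cons a t ih =>
    rw [fst_cons, snd_cons]
    simp only [List.countP_cons]
    omega

lemma countP_block {α : Type*} (p : α → Bool) (v w : List α)
    (hv : ∀ x ∈ v, p x) (hw : ∀ x ∈ w, ¬ p x = true) :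
    (altSplit (v ++ w)).1.countP p = (v.length + 1) / 2 ∧
    (altSplit (v ++ w)).2.countP p = v.length / 2 := by
  induction v with
  | nil =>
    have h0 : w.countP p = 0 := List.countP_eq_zero.mpr hw
    have h1 := countP_altSplit p w
    simp only [List.nil_append, List.length_nil]
    omega
  | cons a v' ih =>
    obtain ⟨ih1, ih2⟩ := ih (fun x hx => hv x (List.mem_cons_of_mem _ hx))
    simp only [List.cons_append, fst_cons, snd_cons, List.countP_cons, List.length_cons]
    rw [if_pos (hv a (List.mem_cons_self)), ih1, ih2]
    omega

lemma countP_altSplit_ge {α : Type*} (p : α → Bool) (u v w : List α)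
    (hu : ∀ x ∈ u, ¬ p x = true) (hv : ∀ x ∈ v, p x) (hw : ∀ x ∈ w, ¬ p x = true) :
    v.length / 2 ≤ (altSplit (u ++ v ++ w)).1.countP p ∧
    v.length / 2 ≤ (altSplit (u ++ v ++ w)).2.countP p := by
  induction u with
  | nil =>
    simp only [List.nil_append]
    obtain ⟨h1, h2⟩ := countP_block p v w hv hw
    rw [h1, h2]
    omega
  | cons a u' ih =>
    obtain ⟨ih1, ih2⟩ := ih (fun x hx => hu x (List.mem_cons_of_mem _ hx))
    simp only [List.cons_append, fst_cons, snd_cons, List.countP_cons]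
    rw [if_neg (hu a (List.mem_cons_self))]
    omega

lemma not_mem_dropWhile_sorted {α : Type*} [LinearOrder α] (q : α → Bool)
    (hq : ∀ x y : α, x ≤ y → q y → q x) :
    ∀ (l : List α), l.Pairwise (· ≤ ·) → ∀ x ∈ l.dropWhile q, ¬ q x = true := by
  intro l
  induction l with
  | nil => simp
  | cons a t ih =>
    intro hs x hx
    rw [List.pairwise_cons] at hs
    rw [List.dropWhile_cons] at hx
    by_cases h : q a
    · rw [if_pos h] at hx
      exact ih hs.2 x hx
    · rw [if_neg h] at hx
      rcases List.mem_cons.mp hx with rfl | hx'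
      · exact h
      · intro hqx
        exact h (hq a x (hs.1 x hx') hqx)

lemma sorted_decomp {α : Type*} [LinearOrder α] (l : List α)
    (hs : l.Pairwise (· ≤ ·)) (a b : α) :
    ∃ u v w : List α, l = u ++ v ++ w ∧
      (∀ x ∈ u, ¬ (a ≤ x ∧ x ≤ b)) ∧ (∀ x ∈ v, a ≤ x ∧ x ≤ b) ∧
      (∀ x ∈ w, ¬ (a ≤ x ∧ x ≤ b)) := by
  set q1 : α → Bool := fun x => decide (x < a) with hq1
  set q2 : α → Bool := fun x => decide (x ≤ b) with hq2
  set u := l.takeWhile q1 with hu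
  set r := l.dropWhile q1 with hr
  set v := r.takeWhile q2 with hvv
  set w := r.dropWhile q2 with hww
  have hlr : l = u ++ r := (List.takeWhile_append_dropWhile ..).symm
  have hrvw : r = v ++ w := (List.takeWhile_append_dropWhile ..).symm
  have hrsub : r.Sublist l := List.dropWhile_sublist q1 (l := l)
  have hrs : r.Pairwise (· ≤ ·) := hs.sublist hrsub
  have hra : ∀ x ∈ r, a ≤ x := by
    intro x hx
    have := not_mem_dropWhile_sorted q1
      (fun x y hxy hy => by simp only [hq1, decide_eq_true_eq] at *; exact lt_of_le_of_lt hxy hy)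
      l hs x hx
    simp only [hq1, decide_eq_true_eq] at this
    exact not_lt.mp this
  refine ⟨u, v, w, by rw [List.append_assoc, ← hrvw]; exact hlr, ?_, ?_, ?_⟩
  · intro x hx
    have := List.mem_takeWhile_imp hx
    simp only [hq1, decide_eq_true_eq] at this
    intro hc
    exact absurd this (not_lt.mpr hc.1)
  · intro x hx
    have h1 := List.mem_takeWhile_imp hx
    simp only [hq2, decide_eq_true_eq] at h1
    have hxr : x ∈ r := List.takeWhile_subset q2 hx
    exact ⟨hra x hxr, h1⟩
  · intro x hx
    have := not_mem_dropWhile_sorted q2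
      (fun x y hxy hy => by simp only [hq2, decide_eq_true_eq] at *; exact le_trans hxy hy)
      r hrs x hx
    simp only [hq2, decide_eq_true_eq] at this
    intro hc
    exact this hc.2


lemma exists_adjacent_pair {α : Type*} [LinearOrder α] (S : Finset α) (x y : α)
    (hx : x ∈ S) (hy : y ∈ S) (hxy : x ≠ y) :
    ∃ a ∈ S, ∃ b ∈ S, a < b ∧ ∀ z ∈ S, ¬ (a < z ∧ z < b) := by
  classical
  have hSne : S.Nonempty := ⟨x, hx⟩
  set a := S.min' hSne with ha
  have haS : a ∈ S := S.min'_mem hSne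
  have hne' : (S.erase a).Nonempty := by
    rcases eq_or_ne x a with rfl | h
    · exact ⟨y, Finset.mem_erase.mpr ⟨fun h => hxy h.symm, hy⟩⟩
    · exact ⟨x, Finset.mem_erase.mpr ⟨h, hx⟩⟩
  set b := (S.erase a).min' hne' with hb
  have hbS' : b ∈ S.erase a := Finset.min'_mem _ hne'
  have hbS : b ∈ S := Finset.mem_of_mem_erase hbS'
  have hab : a < b :=
    lt_of_le_of_ne (S.min'_le b hbS) (Ne.symm (Finset.mem_erase.mp hbS').1)
  refine ⟨a, haS, b, hbS, hab, ?_⟩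
  intro z hz ⟨h1, h2⟩
  have hz' : z ∈ S.erase a := Finset.mem_erase.mpr ⟨ne_of_gt h1, hz⟩
  exact absurd (Finset.min'_le _ z hz') (not_le.mpr h2)

lemma exists_nbr_not_mem {W : Type*} [DecidableEq W] (G : SimpleGraph W) (C : Finset W)
    (h : IsMinVertexCover G C) (v : W) (hv : v ∈ C) : ∃ w, G.Adj v w ∧ w ∉ C := by
  by_contra hno
  push_neg at hno
  have hcov : IsVertexCover G (C.erase v) := by
    intro a b hab
    rcases h.1 a b hab with ha | hb
    · by_cases hav : a = v
      · subst hav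
        have hbC : b ∈ C := hno b hab
        exact Or.inr (Finset.mem_erase.mpr ⟨fun hbv => G.loopless.irrefl a (hbv ▸ hab), hbC⟩)
      · exact Or.inl (Finset.mem_erase.mpr ⟨hav, ha⟩)
    · by_cases hbv : b = v
      · subst hbv
        have haC : a ∈ C := hno a hab.symm
        exact Or.inl (Finset.mem_erase.mpr ⟨fun hav => G.loopless.irrefl b (hav ▸ hab.symm), haC⟩)
      · exact Or.inr (Finset.mem_erase.mpr ⟨hbv, hb⟩)
  have heq := h.2 _ (Finset.erase_subset _ _) hcov
  exact Finset.notMem_erase v C (by rw [heq]; exact hv)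

lemma minVC_of {W : Type*} (G : SimpleGraph W) (C : Finset W)
    (hc : IsVertexCover G C) (h : ∀ v ∈ C, ∃ w, G.Adj v w ∧ w ∉ C) :
    IsMinVertexCover G C := by
  refine ⟨hc, fun D hD hDc => ?_⟩
  refine Finset.Subset.antisymm hD ?_
  intro v hv
  obtain ⟨w, hadj, hw⟩ := h v hv
  rcases hDc v w hadj with h' | h'
  · exact h'
  · exact absurd (hD h') hw

lemma filter_lt_card_add {α : Type*} [LinearOrder α] [LocallyFiniteOrder α]
    (C : Finset α) (x y : α) (h : x ≤ y) :
    (C.filter (· < y)).card =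
      (C.filter (· < x)).card + ∑ z ∈ Finset.Ico x y, (if z ∈ C then 1 else 0) := by
  classical
  have h1 : C.filter (· < y) = C.filter (· < x) ∪ C.filter (fun z => x ≤ z ∧ z < y) := by
    ext z
    simp only [Finset.mem_filter, Finset.mem_union]
    constructor
    · rintro ⟨hz, hzy⟩
      rcases lt_or_ge z x with h' | h'
      · exact Or.inl ⟨hz, h'⟩
      · exact Or.inr ⟨hz, h', hzy⟩
    · rintro (⟨hz, hzx⟩ | ⟨hz, _, hzy⟩)
      · exact ⟨hz, lt_of_lt_of_le hzx h⟩
      · exact ⟨hz, hzy⟩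
  have h2 : Disjoint (C.filter (· < x)) (C.filter (fun z => x ≤ z ∧ z < y)) := by
    rw [Finset.disjoint_left]
    intro z hz1 hz2
    rw [Finset.mem_filter] at hz1 hz2
    exact absurd hz2.2.1 (not_le.mpr hz1.2)
  rw [h1, Finset.card_union_of_disjoint h2]
  congr 1
  have h3 : C.filter (fun z => x ≤ z ∧ z < y) = (Finset.Ico x y).filter (· ∈ C) := by
    ext z
    simp only [Finset.mem_filter, Finset.mem_Ico]
    tauto
  rw [h3, Finset.card_filter]

end AltSplitAux

/-- Theorem 2.1: let `G` be a proper interval graph on `[n]` and `C_1, C_2`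
minimal vertex covers of `G`.  List the multiset union of `C_1` and `C_2` in increasing order
as `i_1 ≤ i_2 ≤ ⋯ ≤ i_k` and let `D_1 = {i_ℓ : ℓ odd}`, `D_2 = {i_ℓ : ℓ even}`.  Then
`D_1` and `D_2` are minimal vertex covers of `G`; equivalently, the vertex cover ideal of `G`
is sortable: `sort(x_{C_1}, x_{C_2}) = (x_{D_1}, x_{D_2})` is again a pair of minimal
generators. -/
theorem cover_ideal_of_properInterval_sortable (n : ℕ) (G : SimpleGraph (Fin n))
    (hG : IsProperInterval G) (C₁ C₂ : Finset (Fin n))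
    (h₁ : IsMinVertexCover G C₁) (h₂ : IsMinVertexCover G C₂)
    (l : List (Fin n)) (hl : l = Multiset.sort (C₁.val + C₂.val) (· ≤ ·))
    (D₁ D₂ : Finset (Fin n))
    (hD₁ : D₁ = ((altSplit l).1).toFinset) (hD₂ : D₂ = ((altSplit l).2).toFinset) :
    IsMinVertexCover G D₁ ∧ IsMinVertexCover G D₂ := by
  classical
  have hsort : l.Pairwise (· ≤ ·) := by rw [hl]; exact Multiset.pairwise_sort _ _
  have hlM : (l : Multiset (Fin n)) = C₁.val + C₂.val := by
    rw [hl]; exact Multiset.sort_eq _ _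
  -- the multiplicity function
  have hcount : ∀ x, l.count x =
      (if x ∈ C₁ then 1 else 0) + (if x ∈ C₂ then 1 else 0) := by
    intro x
    rw [← Multiset.coe_count, hlM, Multiset.count_add,
      Multiset.count_eq_of_nodup C₁.nodup, Multiset.count_eq_of_nodup C₂.nodup]
    rfl
  have hcle : ∀ x, l.count x ≤ 2 := by
    intro x; rw [hcount x]; split_ifs <;> omega
  have hF : ∀ x : Fin n, l.countP (fun y => decide (y < x)) =
      (C₁.filter (· < x)).card + (C₂.filter (· < x)).card := by
    intro x
    have h2 : ∀ C : Finset (Fin n),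
        Multiset.countP (· < x) C.val = (C.filter (· < x)).card := by
      intro C; rw [Multiset.countP_eq_card_filter]; rfl
    have h1 : l.countP (fun y => decide (y < x)) =
        Multiset.countP (· < x) (l : Multiset (Fin n)) := rfl
    rw [h1, hlM, Multiset.countP_add, h2, h2]
  have hnd₁ : (altSplit l).1.Nodup := AltSplitAux.nodup_fst l hsort hcle
  have hnd₂ : (altSplit l).2.Nodup := AltSplitAux.nodup_snd l hsort hcle
  -- membership characterizations
  have hmem₁ : ∀ x, x ∈ D₁ ↔
      ((if x ∈ C₁ then 1 else 0) + (if x ∈ C₂ then 1 else 0) = 2 ∨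
       ((if x ∈ C₁ then 1 else 0) + (if x ∈ C₂ then 1 else 0) = 1 ∧
        ((C₁.filter (· < x)).card + (C₂.filter (· < x)).card) % 2 = 0)) := by
    intro x
    rw [hD₁, List.mem_toFinset, (AltSplitAux.mem_altSplit_iff l hsort hcle x).1,
      hcount, hF]
  have hmem₂ : ∀ x, x ∈ D₂ ↔
      ((if x ∈ C₁ then 1 else 0) + (if x ∈ C₂ then 1 else 0) = 2 ∨
       ((if x ∈ C₁ then 1 else 0) + (if x ∈ C₂ then 1 else 0) = 1 ∧
        ((C₁.filter (· < x)).card + (C₂.filter (· < x)).card) % 2 = 1)) := by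
    intro x
    rw [hD₂, List.mem_toFinset, (AltSplitAux.mem_altSplit_iff l hsort hcle x).2,
      hcount, hF]
  -- ############ cover part ############
  have hcov : ∀ a b : Fin n, a < b → G.Adj a b →
      (a ∈ D₁ ∨ b ∈ D₁) ∧ (a ∈ D₂ ∨ b ∈ D₂) := by
    intro a b hab hadj
    set T := Finset.Icc a b with hT
    set p : Fin n → Bool := fun z => decide (a ≤ z ∧ z ≤ b) with hp
    obtain ⟨u, v, w, hdec, hu, hv, hw⟩ := AltSplitAux.sorted_decomp l hsort a b
    have hu' : ∀ x ∈ u, ¬ p x = true := by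
      intro x hx; simpa [hp] using hu x hx
    have hv' : ∀ x ∈ v, p x = true := by
      intro x hx; simpa [hp] using hv x hx
    have hw' : ∀ x ∈ w, ¬ p x = true := by
      intro x hx; simpa [hp] using hw x hx
    have hge := AltSplitAux.countP_altSplit_ge p u v w hu' hv' hw'
    rw [← hdec] at hge
    -- v.length equals total count of T-elements
    have hvlen : l.countP p = v.length := by
      rw [hdec, List.countP_append, List.countP_append,
        List.countP_eq_length.mpr hv', List.countP_eq_zero.mpr hu',
        List.countP_eq_zero.mpr hw']
      omega
    -- total count in terms of the two covers
    have hm : l.countP p =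
        (C₁.filter (fun z => a ≤ z ∧ z ≤ b)).card +
        (C₂.filter (fun z => a ≤ z ∧ z ≤ b)).card := by
      have h2 : ∀ C : Finset (Fin n),
          Multiset.countP (fun z => a ≤ z ∧ z ≤ b) C.val =
          (C.filter (fun z => a ≤ z ∧ z ≤ b)).card := by
        intro C; rw [Multiset.countP_eq_card_filter]; rfl
      have h1 : l.countP p =
          Multiset.countP (fun z => a ≤ z ∧ z ≤ b) (l : Multiset (Fin n)) := rfl
      rw [h1, hlM, Multiset.countP_add, h2, h2]
    -- each cover misses at most one vertex of T
    have hTbound : ∀ C : Finset (Fin n), IsVertexCover G C →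
        T.card ≤ (C.filter (fun z => a ≤ z ∧ z ≤ b)).card + 1 := by
      intro C hC
      have hfil : C.filter (fun z => a ≤ z ∧ z ≤ b) = T ∩ C := by
        ext z
        simp [hT, Finset.mem_Icc, Finset.mem_inter, Finset.mem_filter, and_comm]
      have hsd : (T \ C).card ≤ 1 := by
        rw [Finset.card_le_one]
        intro x hx y hy
        rw [Finset.mem_sdiff, Finset.mem_Icc] at hx hy
        by_contra hne
        have hxy : G.Adj x y := hG a b hab hadj x y hx.1.1 hx.1.2 hy.1.1 hy.1.2 hne
        rcases hC x y hxy with h | h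
        · exact hx.2 h
        · exact hy.2 h
      have := Finset.card_inter_add_card_sdiff T C
      rw [hfil]
      omega
    have hb1 := hTbound C₁ h₁.1
    have hb2 := hTbound C₂ h₂.1
    have ht2 : 2 ≤ T.card := by
      have hsub : ({a, b} : Finset (Fin n)) ⊆ T := by
        intro z hz
        rcases Finset.mem_insert.mp hz with rfl | hz
        · exact Finset.mem_Icc.mpr ⟨le_refl _, le_of_lt hab⟩
        · rw [Finset.mem_singleton] at hz
          subst hz
          exact Finset.mem_Icc.mpr ⟨le_of_lt hab, le_refl _⟩
      have := Finset.card_le_card hsub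
      rwa [Finset.card_pair (ne_of_lt hab)] at this
    -- generic: from a count lower bound to covering {a,b}
    have hfinal : ∀ P : List (Fin n), P.Nodup → T.card - 1 ≤ P.countP p →
        a ∈ P.toFinset ∨ b ∈ P.toFinset := by
      intro P hnd hcnt
      by_contra hcon
      push_neg at hcon
      obtain ⟨hna, hnb⟩ := hcon
      have hndf : (P.filter p).Nodup := hnd.filter p
      have hsub : (P.filter p).toFinset ⊆ (T.erase a).erase b := by
        intro z hz
        rw [List.mem_toFinset, List.mem_filter] at hz
        obtain ⟨hzP, hzp⟩ := hz
        simp only [hp, decide_eq_true_eq] at hzp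
        refine Finset.mem_erase.mpr ⟨?_, Finset.mem_erase.mpr ⟨?_, ?_⟩⟩
        · rintro rfl; exact hnb (List.mem_toFinset.mpr hzP)
        · rintro rfl; exact hna (List.mem_toFinset.mpr hzP)
        · exact Finset.mem_Icc.mpr hzp
      have hcard1 : (P.filter p).toFinset.card = P.countP p := by
        rw [List.toFinset_card_of_nodup hndf, ← List.countP_eq_length_filter]
      have hcard2 : ((T.erase a).erase b).card = T.card - 2 := by
        rw [Finset.card_erase_of_mem, Finset.card_erase_of_mem]
        · omega
        · exact Finset.mem_Icc.mpr ⟨le_refl _, le_of_lt hab⟩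
        · exact Finset.mem_erase.mpr ⟨ne_of_gt hab,
            Finset.mem_Icc.mpr ⟨le_of_lt hab, le_refl _⟩⟩
      have := Finset.card_le_card hsub
      omega
    constructor
    · rw [hD₁]
      exact hfinal _ hnd₁ (by omega)
    · rw [hD₂]
      exact hfinal _ hnd₂ (by omega)
  have hcov₁ : IsVertexCover G D₁ := by
    intro a b hadj
    rcases lt_or_gt_of_ne (G.ne_of_adj hadj) with h | h
    · exact (hcov a b h hadj).1
    · exact Or.symm ((hcov b a h hadj.symm).1)
  have hcov₂ : IsVertexCover G D₂ := by
    intro a b hadj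
    rcases lt_or_gt_of_ne (G.ne_of_adj hadj) with h | h
    · exact (hcov a b h hadj).2
    · exact Or.symm ((hcov b a h hadj.symm).2)
  -- ############ minimality part ############
  have hFadd : ∀ x y : Fin n, x ≤ y →
      (C₁.filter (· < y)).card + (C₂.filter (· < y)).card =
      (C₁.filter (· < x)).card + (C₂.filter (· < x)).card +
        ∑ z ∈ Finset.Ico x y,
          ((if z ∈ C₁ then 1 else 0) + (if z ∈ C₂ then 1 else 0)) := by
    intro x y hxy
    rw [AltSplitAux.filter_lt_card_add C₁ x y hxy,
      AltSplitAux.filter_lt_card_add C₂ x y hxy, Finset.sum_add_distrib]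
    ring_nf
  have key : ∀ (D : Finset (Fin n)) (e : ℕ),
      (∀ x, x ∈ D ↔ ((if x ∈ C₁ then 1 else 0) + (if x ∈ C₂ then 1 else 0) = 2 ∨
        ((if x ∈ C₁ then 1 else 0) + (if x ∈ C₂ then 1 else 0) = 1 ∧
         ((C₁.filter (· < x)).card + (C₂.filter (· < x)).card) % 2 = e))) →
      ∀ v ∈ D, ¬ (∀ w, G.Adj v w → w ∈ D) := by
    intro D e hmem v hv hall
    have hv12 : v ∈ C₁ ∨ v ∈ C₂ := by
      by_contra hcon
      push_neg at hcon
      rcases (hmem v).mp hv with h | ⟨h, -⟩ <;>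
        rw [if_neg hcon.1, if_neg hcon.2] at h <;> omega
    have hnbr : ∃ w, G.Adj v w := by
      rcases hv12 with h | h
      · obtain ⟨w, hw, -⟩ := AltSplitAux.exists_nbr_not_mem G C₁ h₁ v h; exact ⟨w, hw⟩
      · obtain ⟨w, hw, -⟩ := AltSplitAux.exists_nbr_not_mem G C₂ h₂ v h; exact ⟨w, hw⟩
    obtain ⟨w₀, hw₀⟩ := hnbr
    set N : Finset (Fin n) := insert v (Finset.univ.filter (G.Adj v)) with hN
    have hNne : N.Nonempty := ⟨v, Finset.mem_insert_self _ _⟩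
    set m := N.min' hNne with hm
    set M := N.max' hNne with hM
    set T := Finset.Icc m M with hT
    have hvN : v ∈ N := Finset.mem_insert_self _ _
    have hadjN : ∀ z, G.Adj v z → z ∈ N := fun z hz =>
      Finset.mem_insert_of_mem (Finset.mem_filter.mpr ⟨Finset.mem_univ _, hz⟩)
    have hNmem : ∀ z ∈ N, z = v ∨ G.Adj v z := by
      intro z hz
      rcases Finset.mem_insert.mp hz with rfl | hz
      · exact Or.inl rfl
      · exact Or.inr (Finset.mem_filter.mp hz).2
    have hvT : v ∈ T := Finset.mem_Icc.mpr ⟨N.min'_le v hvN, N.le_max' v hvN⟩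
    have hNT : ∀ z, G.Adj v z → z ∈ T := fun z hz =>
      Finset.mem_Icc.mpr ⟨N.min'_le z (hadjN z hz), N.le_max' z (hadjN z hz)⟩
    have hTadj : ∀ x ∈ T, x ≠ v → G.Adj v x := by
      intro x hxT hxv
      rw [hT, Finset.mem_Icc] at hxT
      rcases lt_or_gt_of_ne hxv with hlt | hgt
      · have hmv : m < v := lt_of_le_of_lt hxT.1 hlt
        have hmadj : G.Adj v m := by
          rcases hNmem m (N.min'_mem hNne) with h | h
          · exact absurd h (ne_of_lt hmv)
          · exact h
        exact (hG m v hmv hmadj.symm x v hxT.1 (le_of_lt hlt) (le_of_lt hmv)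
          (le_refl v) hxv).symm
      · have hvM : v < M := lt_of_lt_of_le hgt hxT.2
        have hMadj : G.Adj v M := by
          rcases hNmem M (N.max'_mem hNne) with h | h
          · exact absurd h (ne_of_gt hvM)
          · exact h
        exact hG v M hvM hMadj v x (le_refl v) (le_of_lt hvM) (le_of_lt hgt)
          hxT.2 (Ne.symm hxv)
    have hTD : ∀ x ∈ T, x ∈ D := by
      intro x hxT
      by_cases hxv : x = v
      · exact hxv ▸ hv
      · exact hall x (hTadj x hxT hxv)
    have hc1 : ∀ x ∈ T, (if x ∈ C₁ then 1 else 0) + (if x ∈ C₂ then 1 else 0) = 1 ∨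
        (if x ∈ C₁ then 1 else 0) + (if x ∈ C₂ then 1 else 0) = 2 := by
      intro x hxT
      rcases (hmem x).mp (hTD x hxT) with h | ⟨h, -⟩
      · exact Or.inr h
      · exact Or.inl h
    have hTC : (∀ x ∈ T, x ∈ C₁) ∨ (∀ x ∈ T, x ∈ C₂) := by
      by_contra hcon
      push_neg at hcon
      obtain ⟨⟨x, hxT, hxC₁⟩, ⟨y, hyT, hyC₂⟩⟩ := hcon
      set S := T.filter (fun z =>
        (if z ∈ C₁ then 1 else 0) + (if z ∈ C₂ then 1 else 0) = 1) with hS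
      have hxS : x ∈ S := by
        refine Finset.mem_filter.mpr ⟨hxT, ?_⟩
        rcases hc1 x hxT with h | h
        · exact h
        · rw [if_neg hxC₁] at h; split_ifs at h <;> omega
      have hyS : y ∈ S := by
        refine Finset.mem_filter.mpr ⟨hyT, ?_⟩
        rcases hc1 y hyT with h | h
        · exact h
        · rw [if_neg hyC₂] at h; split_ifs at h <;> omega
      have hxy : x ≠ y := by
        rintro rfl
        rcases hc1 x hxT with h | h <;> rw [if_neg hxC₁, if_neg hyC₂] at h <;> omega
      obtain ⟨a1, ha1, b1, hb1, hab1, hbetween⟩ :=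
        AltSplitAux.exists_adjacent_pair S x y hxS hyS hxy
      have ha1T : a1 ∈ T := (Finset.mem_filter.mp ha1).1
      have hb1T : b1 ∈ T := (Finset.mem_filter.mp hb1).1
      have hca := (Finset.mem_filter.mp ha1).2
      have hcb := (Finset.mem_filter.mp hb1).2
      have hpa : ((C₁.filter (· < a1)).card + (C₂.filter (· < a1)).card) % 2 = e := by
        rcases (hmem a1).mp (hTD a1 ha1T) with h | ⟨-, h⟩
        · omega
        · exact h
      have hpb : ((C₁.filter (· < b1)).card + (C₂.filter (· < b1)).card) % 2 = e := by
        rcases (hmem b1).mp (hTD b1 hb1T) with h | ⟨-, h⟩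
        · omega
        · exact h
      have hIoo : ∀ z ∈ Finset.Ioo a1 b1,
          (if z ∈ C₁ then 1 else 0) + (if z ∈ C₂ then 1 else 0) = 2 := by
        intro z hz
        rw [Finset.mem_Ioo] at hz
        have hzT : z ∈ T := by
          rw [hT, Finset.mem_Icc] at ha1T hb1T ⊢
          exact ⟨le_trans ha1T.1 (le_of_lt hz.1), le_trans (le_of_lt hz.2) hb1T.2⟩
        rcases hc1 z hzT with h | h
        · exact absurd hz (hbetween z (Finset.mem_filter.mpr ⟨hzT, h⟩))
        · exact h
      have hmem' : a1 ∈ Finset.Ico a1 b1 := Finset.mem_Ico.mpr ⟨le_refl _, hab1⟩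
      have hsum2 : ∑ z ∈ Finset.Ico a1 b1,
          ((if z ∈ C₁ then 1 else 0) + (if z ∈ C₂ then 1 else 0)) =
          1 + 2 * (Finset.Ioo a1 b1).card := by
        rw [← Finset.add_sum_erase _ _ hmem', Finset.Ico_erase_left, hca,
          Finset.sum_congr rfl hIoo, Finset.sum_const, smul_eq_mul]
        omega
      have hsum := hFadd a1 b1 (le_of_lt hab1)
      rw [hsum2] at hsum
      omega
    rcases hTC with h | h
    · obtain ⟨w, hadj, hwC⟩ := AltSplitAux.exists_nbr_not_mem G C₁ h₁ v (h v hvT)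
      exact hwC (h w (hNT w hadj))
    · obtain ⟨w, hadj, hwC⟩ := AltSplitAux.exists_nbr_not_mem G C₂ h₂ v (h v hvT)
      exact hwC (h w (hNT w hadj))
  constructor
  · refine AltSplitAux.minVC_of G D₁ hcov₁ ?_
    intro v hv
    by_contra hcon
    push_neg at hcon
    exact key D₁ 0 hmem₁ v hv hcon
  · refine AltSplitAux.minVC_of G D₂ hcov₂ ?_
    intro v hv
    by_contra hcon
    push_neg at hcon
    exact key D₂ 1 hmem₂ v hv hcon
end
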